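/- arXiv:2308.10766 — 6 statements merged into one kernel-verified Lean document; each statement's English description precedes it below -/
import Mathlib

section
/- Let n ≥ 1 and let Λ be an invertible (2n+2)×(2n+2) real matrix. Then ΛᵀηΛ = η if and only if the last row of Λ is (0, …, 0, ε) with ε ∈ {1, −1}; equivalently, if and only if there exist an invertible (2n+1)×(2n+1) real matrix Ω, a vector u ∈ ℝ^{2n+1} and ε ∈ {1, −1} such that Λ = Λ°(Ω, u)·Δ(ε). -/
open Matrix

noncomputable section

/-- `η`: the `(2n+2)×(2n+2)` matrix whose only nonzero entry is a `1`
in the bottom-right corner. -/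
def etaM (n : ℕ) : Matrix (Fin (2*n+2)) (Fin (2*n+2)) ℝ :=
  Matrix.of fun i j => if i.val = 2*n+1 ∧ j.val = 2*n+1 then 1 else 0

/-- `ζ°`: block-diagonal with `n` copies of `[[0,1],[-1,0]]`. -/
def zetaC (n : ℕ) : Matrix (Fin (2*n)) (Fin (2*n)) ℝ :=
  Matrix.of fun i j =>
    if j.val = i.val + 1 ∧ i.val % 2 = 0 then 1
    else if i.val = j.val + 1 ∧ j.val % 2 = 0 then -1 else 0

/-- `ζ = diag(ζ°, [[0,1],[-1,0]])`: block-diagonal with `n+1` copies of `[[0,1],[-1,0]]`. -/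
def zetaBig (n : ℕ) : Matrix (Fin (2*n+2)) (Fin (2*n+2)) ℝ :=
  Matrix.of fun i j =>
    if j.val = i.val + 1 ∧ i.val % 2 = 0 then 1
    else if i.val = j.val + 1 ∧ j.val % 2 = 0 then -1 else 0

/-- `Λ°(Ω,u)`: the block matrix `[[Ω, u],[0, 1]]` (blocks of sizes `2n+1` and `1`). -/
def LamO (n : ℕ) (Ω : Matrix (Fin (2*n+1)) (Fin (2*n+1)) ℝ) (u : Fin (2*n+1) → ℝ) :
    Matrix (Fin (2*n+2)) (Fin (2*n+2)) ℝ :=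
  Matrix.of fun i j =>
    if hi : i.val < 2*n+1 then
      if hj : j.val < 2*n+1 then Ω ⟨i.val, hi⟩ ⟨j.val, hj⟩ else u ⟨i.val, hi⟩
    else
      if j.val < 2*n+1 then 0 else 1

/-- `Δ(ε) = diag(1,…,1,ε)`. -/
def DeltaM (n : ℕ) (ε : ℝ) : Matrix (Fin (2*n+2)) (Fin (2*n+2)) ℝ :=
  Matrix.diagonal fun i => if i.val < 2*n+1 then 1 else ε

/-- `Γ°(Σ,w,r)`: the block matrix (blocks of sizes `2n`, `1`, `1`)
`[[Σ, 0, w],[wᵀζ°Σ, 1, 2r],[0, 0, 1]]`. -/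
def GamO (n : ℕ) (S : Matrix (Fin (2*n)) (Fin (2*n)) ℝ) (w : Fin (2*n) → ℝ) (r : ℝ) :
    Matrix (Fin (2*n+2)) (Fin (2*n+2)) ℝ :=
  Matrix.of fun i j =>
    if hi : i.val < 2*n then
      if hj : j.val < 2*n then S ⟨i.val, hi⟩ ⟨j.val, hj⟩
      else if j.val = 2*n then 0 else w ⟨i.val, hi⟩
    else if i.val = 2*n then
      if hj : j.val < 2*n then Matrix.vecMul (Matrix.vecMul w (zetaC n)) S ⟨j.val, hj⟩
      else if j.val = 2*n then 1 else 2*r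
    else
      if j.val = 2*n+1 then 1 else 0

/-- `Υ(w,r) = Γ°(1_{2n}, w, r)`: Weyl–Heisenberg element in unpolarized coordinates. -/
def Ups (n : ℕ) (w : Fin (2*n) → ℝ) (r : ℝ) : Matrix (Fin (2*n+2)) (Fin (2*n+2)) ℝ :=
  GamO n 1 w r

/-- The Lie algebra generator `W_a = [[0,0,e_a],[e_aᵀζ°,0,0],[0,0,0]]`. -/
def Wmat (n : ℕ) (a : Fin (2*n)) : Matrix (Fin (2*n+2)) (Fin (2*n+2)) ℝ :=
  Matrix.of fun i j =>
    if i.val < 2*n ∧ j.val = 2*n+1 then (if i.val = a.val then 1 else 0)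
    else if _hi : i.val = 2*n then
      (if hj : j.val < 2*n then zetaC n a ⟨j.val, hj⟩ else 0)
    else 0

/-- The central generator `R`: only nonzero entry a `2` in position `(2n+1, 2n+2)` (1-indexed). -/
def Rmat (n : ℕ) : Matrix (Fin (2*n+2)) (Fin (2*n+2)) ℝ :=
  Matrix.of fun i j => if i.val = 2*n ∧ j.val = 2*n+1 then 2 else 0

/-- Time reversal `T = diag(1_{2n}, -1, -1)`. -/
def Tmat (n : ℕ) : Matrix (Fin (2*n+2)) (Fin (2*n+2)) ℝ :=
  Matrix.diagonal fun i => if i.val < 2*n then 1 else -1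

/-- `Σ(R)`: the `2n×2n` matrix with `Σ(R)_{2i-1,2j-1} = Σ(R)_{2i,2j} = R_{ij}`
(1-indexed) and all other entries zero. -/
def SigmaR (n : ℕ) (R : Matrix (Fin n) (Fin n) ℝ) : Matrix (Fin (2*n)) (Fin (2*n)) ℝ :=
  Matrix.of fun a b =>
    if a.val % 2 = b.val % 2 then
      R ⟨a.val / 2, by have := a.isLt; omega⟩ ⟨b.val / 2, by have := b.isLt; omega⟩
    else 0

/-- `ι(v) ∈ ℝ^{2n}` with `ι(v)_{2i-1} = v_i` and `ι(v)_{2i} = 0` (1-indexed). -/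
def iotaV (n : ℕ) (v : Fin n → ℝ) : Fin (2*n) → ℝ :=
  fun a => if a.val % 2 = 0 then v ⟨a.val / 2, by have := a.isLt; omega⟩ else 0

/-- The position-momentum part `y` of a point `z = (y, ε, t)` of extended phase space. -/
def yPart (n : ℕ) (z : Fin (2*n+2) → ℝ) : Fin (2*n) → ℝ :=
  fun a => z ⟨a.val, by have := a.isLt; omega⟩

/-- The time coordinate `t` of a point `z = (y, ε, t)` of extended phase space. -/
def tCoord (n : ℕ) (z : Fin (2*n+2) → ℝ) : ℝ := z ⟨2*n+1, by omega⟩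

/-- The map `ρ(y, ε, t) = (y + φ(t), ε + H(y,t), t + c)` on extended phase space. -/
def rhoMap (n : ℕ) (φ : ℝ → Fin (2*n) → ℝ) (H : (Fin (2*n) → ℝ) → ℝ → ℝ) (c : ℝ)
    (z : Fin (2*n+2) → ℝ) : Fin (2*n+2) → ℝ :=
  fun i =>
    if hi : i.val < 2*n then z i + φ (tCoord n z) ⟨i.val, hi⟩
    else if i.val = 2*n then z i + H (yPart n z) (tCoord n z)
    else z i + c

/-- The Jacobian matrix (in the standard coordinates) of a map `f : ℝ^N → ℝ^N` at `z`. -/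
def jacM (N : ℕ) (f : (Fin N → ℝ) → (Fin N → ℝ)) (z : Fin N → ℝ) :
    Matrix (Fin N) (Fin N) ℝ :=
  Matrix.of fun i j => fderiv ℝ f z (Pi.single j 1) i


lemma eta_key (n : ℕ) (A : Matrix (Fin (2*n+2)) (Fin (2*n+2)) ℝ) (i j : Fin (2*n+2)) :
    (Aᵀ * etaM n * A) i j = A ⟨2*n+1, by omega⟩ i * A ⟨2*n+1, by omega⟩ j := by
  set L : Fin (2*n+2) := ⟨2*n+1, by omega⟩ with hL
  have hη : ∀ a b : Fin (2*n+2),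
      etaM n a b = (if a = L then (1:ℝ) else 0) * (if b = L then (1:ℝ) else 0) := by
    intro a b
    simp only [etaM, Matrix.of_apply, Fin.ext_iff, hL]
    by_cases h1 : (a:ℕ) = 2*n+1 <;> by_cases h2 : (b:ℕ) = 2*n+1 <;> simp [h1, h2]
  have h1 : ∀ k : Fin (2*n+2), (Aᵀ * etaM n) i k = A L i * (if k = L then 1 else 0) := by
    intro k
    rw [Matrix.mul_apply]
    simp only [hη, Matrix.transpose_apply, ite_mul, one_mul, zero_mul, mul_ite, mul_zero,
      mul_one]
    simp [Finset.sum_ite_eq']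
  rw [Matrix.mul_apply]
  simp only [h1, ite_mul, one_mul, zero_mul, mul_ite, mul_zero, mul_one]
  simp [Finset.sum_ite_eq']

lemma eta_fwd (n : ℕ) (A : Matrix (Fin (2*n+2)) (Fin (2*n+2)) ℝ)
    (h : Aᵀ * etaM n * A = etaM n) :
    ∃ ε : ℝ, (ε = 1 ∨ ε = -1) ∧
      ∀ j : Fin (2*n+2), A ⟨2*n+1, by omega⟩ j = if j.val = 2*n+1 then ε else 0 := by
  set L : Fin (2*n+2) := ⟨2*n+1, by omega⟩ with hL
  have hLL : A L L * A L L = 1 := by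
    have := congrFun (congrFun h L) L
    rw [eta_key] at this
    simpa [etaM, hL] using this
  refine ⟨A L L, mul_self_eq_one_iff.mp hLL, ?_⟩
  intro j
  by_cases hj : (j:ℕ) = 2*n+1
  · have hjL : j = L := Fin.ext hj
    rw [if_pos hj, hjL]
  · have h0 : A L j * A L L = 0 := by
      have := congrFun (congrFun h j) L
      rw [eta_key] at this
      simpa [etaM, hj] using this
    have hne : A L L ≠ 0 := by
      intro h'
      rw [h'] at hLL; simp at hLL
    simp only [hj, if_neg, ite_false]
    exact (mul_eq_zero.mp h0).resolve_right hne

lemma eta_bwd (n : ℕ) (A : Matrix (Fin (2*n+2)) (Fin (2*n+2)) ℝ)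
    (h : ∃ ε : ℝ, (ε = 1 ∨ ε = -1) ∧
      ∀ j : Fin (2*n+2), A ⟨2*n+1, by omega⟩ j = if j.val = 2*n+1 then ε else 0) :
    Aᵀ * etaM n * A = etaM n := by
  obtain ⟨ε, hε, hrow⟩ := h
  have hε2 : ε * ε = 1 := by rcases hε with h|h <;> rw [h] <;> ring
  ext i j
  rw [eta_key, hrow i, hrow j]
  by_cases hi : (i:ℕ) = 2*n+1 <;> by_cases hj : (j:ℕ) = 2*n+1 <;>
    simp [etaM, hi, hj, hε2]

theorem statement0 (n : ℕ) (hn : 1 ≤ n) (Λ : Matrix (Fin (2*n+2)) (Fin (2*n+2)) ℝ) (hΛ : IsUnit Λ) :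
    (Λᵀ * etaM n * Λ = etaM n ↔
      ∃ ε : ℝ, (ε = 1 ∨ ε = -1) ∧
        ∀ j : Fin (2*n+2), Λ ⟨2*n+1, by omega⟩ j = if j.val = 2*n+1 then ε else 0) ∧
    (Λᵀ * etaM n * Λ = etaM n ↔
      ∃ (Ω : Matrix (Fin (2*n+1)) (Fin (2*n+1)) ℝ) (u : Fin (2*n+1) → ℝ) (ε : ℝ),
        IsUnit Ω ∧ (ε = 1 ∨ ε = -1) ∧ Λ = LamO n Ω u * DeltaM n ε) := by
  have L : Fin (2*n+2) := ⟨2*n+1, by omega⟩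
  refine ⟨⟨eta_fwd n Λ, eta_bwd n Λ⟩, ?_, ?_⟩
  · -- forward of second iff
    intro h
    obtain ⟨ε, hε, hrow⟩ := eta_fwd n Λ h
    have hε2 : ε * ε = 1 := by rcases hε with h'|h' <;> rw [h'] <;> ring
    have hdet : IsUnit Λ.det := (Matrix.isUnit_iff_isUnit_det Λ).mp hΛ
    have hΛB : Λ * Λ⁻¹ = 1 := Matrix.mul_nonsing_inv Λ hdet
    have e1 : (Λ⁻¹)ᵀ * Λᵀ = 1 := by
      rw [← Matrix.transpose_mul, hΛB, Matrix.transpose_one]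
    have hB : (Λ⁻¹)ᵀ * etaM n * Λ⁻¹ = etaM n := by
      calc (Λ⁻¹)ᵀ * etaM n * Λ⁻¹
          = (Λ⁻¹)ᵀ * (Λᵀ * etaM n * Λ) * Λ⁻¹ := by rw [h]
        _ = ((Λ⁻¹)ᵀ * Λᵀ) * etaM n * (Λ * Λ⁻¹) := by
            simp only [Matrix.mul_assoc]
        _ = etaM n := by rw [e1, hΛB, Matrix.one_mul, Matrix.mul_one]
    obtain ⟨ε', hε', hrow'⟩ := eta_fwd n (Λ⁻¹) hB
    set Ω : Matrix (Fin (2*n+1)) (Fin (2*n+1)) ℝ :=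
      Matrix.of fun a b => Λ a.castSucc b.castSucc with hΩdef
    set Ω' : Matrix (Fin (2*n+1)) (Fin (2*n+1)) ℝ :=
      Matrix.of fun a b => Λ⁻¹ a.castSucc b.castSucc with hΩ'def
    have hΩΩ' : Ω * Ω' = 1 := by
      ext a b
      have h1 := congrFun (congrFun hΛB a.castSucc) b.castSucc
      rw [Matrix.mul_apply, Fin.sum_univ_castSucc] at h1
      have hlast : Λ⁻¹ (Fin.last (2*n+1)) b.castSucc = 0 := by
        have h2 := hrow' (Fin.castSucc b)
        have : Fin.last (2*n+1) = (⟨2*n+1, by omega⟩ : Fin (2*n+2)) := rfl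
        rw [this, h2]
        have hb : (b : ℕ) ≠ 2*n+1 := by have := b.isLt; omega
        simp [hb]
      rw [hlast, mul_zero, add_zero] at h1
      rw [Matrix.mul_apply]
      simp only [hΩdef, hΩ'def, Matrix.of_apply]
      rw [h1]
      simp [Matrix.one_apply, Fin.castSucc_inj]
    have hΩunit : IsUnit Ω := by
      have hd : Ω.det * Ω'.det = 1 := by
        rw [← Matrix.det_mul, hΩΩ', Matrix.det_one]
      exact (Matrix.isUnit_iff_isUnit_det Ω).mpr (isUnit_iff_exists_inv.mpr ⟨_, hd⟩)
    refine ⟨Ω, fun i => ε * Λ i.castSucc ⟨2*n+1, by omega⟩, ε, hΩunit, hε, ?_⟩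
    ext i j
    rw [DeltaM, Matrix.mul_diagonal]
    rw [LamO]
    simp only [Matrix.of_apply]
    by_cases hi : (i:ℕ) < 2*n+1
    · rw [dif_pos hi]
      by_cases hj : (j:ℕ) < 2*n+1
      · rw [dif_pos hj, if_pos hj, mul_one, hΩdef, Matrix.of_apply]
        have hii : (⟨i.val, hi⟩ : Fin (2*n+1)).castSucc = i := Fin.ext rfl
        have hjj : (⟨j.val, hj⟩ : Fin (2*n+1)).castSucc = j := Fin.ext rfl
        rw [hii, hjj]
      · have hjL : j = ⟨2*n+1, by omega⟩ := by
          apply Fin.ext; show (j:ℕ) = 2*n+1; have := j.isLt; omega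
        rw [dif_neg hj, if_neg hj]
        have hii : (⟨i.val, hi⟩ : Fin (2*n+1)).castSucc = i := Fin.ext rfl
        rw [hii, hjL, mul_comm ε, mul_assoc, hε2, mul_one]
    · rw [dif_neg hi]
      have hiL : i = ⟨2*n+1, by omega⟩ := by
        apply Fin.ext; show (i:ℕ) = 2*n+1; have := i.isLt; omega
      by_cases hj : (j:ℕ) < 2*n+1
      · rw [if_pos hj, if_pos hj, mul_one, hiL, hrow j]
        have : (j:ℕ) ≠ 2*n+1 := by omega
        simp [this]
      · have hjv : (j:ℕ) = 2*n+1 := by have := j.isLt; omega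
        rw [if_neg hj, if_neg hj, one_mul, hiL, hrow j]
        simp [hjv]
  · -- backward of second iff
    rintro ⟨Ω, u, ε, hΩ, hε, rfl⟩
    apply eta_bwd
    refine ⟨ε, hε, ?_⟩
    intro j
    rw [DeltaM, Matrix.mul_diagonal]
    simp only [LamO, Matrix.of_apply]
    have hL' : ¬((2*n+1 : ℕ) < 2*n+1) := by omega
    by_cases hj : (j:ℕ) < 2*n+1
    · have : (j:ℕ) ≠ 2*n+1 := by omega
      simp [hL', hj, this]
    · have : (j:ℕ) = 2*n+1 := by have := j.isLt; omega
      simp [hL', hj, this]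

end
end

section
/- Let n ≥ 1 and let Γ be a (2n+2)×(2n+2) real matrix satisfying ΓᵀζΓ = ζ whose last row is (0, …, 0, 1). Then there exist Σ ∈ Sp(2n), w ∈ ℝ^{2n} and r ∈ ℝ such that Γ = Γ°(Σ, w, r). -/
open Matrix

noncomputable section

lemma zsplit (n : ℕ) (f : Fin (2*n+2) → ℝ) :
    ∑ k, f k = (∑ k : Fin (2*n), f ⟨k.val, by have := k.isLt; omega⟩)
      + f ⟨2*n, by omega⟩ + f ⟨2*n+1, by omega⟩ := by
  rw [Fin.sum_univ_castSucc (n := 2*n+1), Fin.sum_univ_castSucc (n := 2*n)]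
  rfl

lemma zetaC_antisymm (n : ℕ) (k l : Fin (2*n)) : zetaC n l k = - zetaC n k l := by
  simp only [zetaC, of_apply]
  split_ifs <;> first | omega | norm_num

lemma zB1 (n : ℕ) (k l : Fin (2*n)) (hk : k.val < 2*n+2) (hl : l.val < 2*n+2) :
    zetaBig n ⟨k.val, hk⟩ ⟨l.val, hl⟩ = zetaC n k l := rfl

lemma zB2 (n : ℕ) (k : Fin (2*n)) (hk : k.val < 2*n+2) (h : 2*n < 2*n+2) :
    zetaBig n ⟨k.val, hk⟩ ⟨2*n, h⟩ = 0 := by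
  have := k.isLt
  simp only [zetaBig, of_apply]
  split_ifs <;> first | omega | norm_num

lemma zB3 (n : ℕ) (k : Fin (2*n)) (hk : k.val < 2*n+2) (h : 2*n+1 < 2*n+2) :
    zetaBig n ⟨k.val, hk⟩ ⟨2*n+1, h⟩ = 0 := by
  have := k.isLt
  simp only [zetaBig, of_apply]
  split_ifs <;> first | omega | norm_num

lemma zB4 (n : ℕ) (k : Fin (2*n)) (hk : k.val < 2*n+2) (h : 2*n < 2*n+2) :
    zetaBig n ⟨2*n, h⟩ ⟨k.val, hk⟩ = 0 := by
  have := k.isLt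
  simp only [zetaBig, of_apply]
  split_ifs <;> first | omega | norm_num

lemma zB5 (n : ℕ) (k : Fin (2*n)) (hk : k.val < 2*n+2) (h : 2*n+1 < 2*n+2) :
    zetaBig n ⟨2*n+1, h⟩ ⟨k.val, hk⟩ = 0 := by
  have := k.isLt
  simp only [zetaBig, of_apply]
  split_ifs <;> first | omega | norm_num

lemma zB6 (n : ℕ) (h : 2*n < 2*n+2) : zetaBig n ⟨2*n, h⟩ ⟨2*n, h⟩ = 0 := by
  simp only [zetaBig, of_apply]; split_ifs <;> first | omega | norm_num

lemma zB7 (n : ℕ) (h : 2*n+1 < 2*n+2) : zetaBig n ⟨2*n+1, h⟩ ⟨2*n+1, h⟩ = 0 := by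
  simp only [zetaBig, of_apply]; split_ifs <;> first | omega | norm_num

lemma zB8 (n : ℕ) (h : 2*n < 2*n+2) (h' : 2*n+1 < 2*n+2) :
    zetaBig n ⟨2*n, h⟩ ⟨2*n+1, h'⟩ = 1 := by
  simp only [zetaBig, of_apply]; rw [if_pos ⟨trivial, by omega⟩]

lemma zB9 (n : ℕ) (h : 2*n < 2*n+2) (h' : 2*n+1 < 2*n+2) :
    zetaBig n ⟨2*n+1, h'⟩ ⟨2*n, h⟩ = -1 := by
  simp only [zetaBig, of_apply]; rw [if_neg (by omega), if_pos ⟨trivial, by omega⟩]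

lemma zBval (n : ℕ) (i j : Fin (2*n+2)) :
    zetaBig n i j = if j.val = i.val + 1 ∧ i.val % 2 = 0 then 1
      else if i.val = j.val + 1 ∧ j.val % 2 = 0 then -1 else 0 := rfl

lemma zZZ (n : ℕ) : zetaBig n * zetaBig n = -1 := by
  ext i j
  rw [mul_apply]
  by_cases hp : i.val % 2 = 0
  · have hi1 : i.val + 1 < 2*n+2 := by have := i.isLt; omega
    set a : Fin (2*n+2) := ⟨i.val+1, hi1⟩ with ha
    have hav : a.val = i.val + 1 := rfl
    rw [Fintype.sum_eq_single a ?side]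
    case side =>
      intro b hb
      have hbv : b.val ≠ i.val + 1 := fun h => hb (Fin.ext (h.trans hav.symm))
      rw [zBval, if_neg (by omega), if_neg (by omega), zero_mul]
    rw [zBval, zBval, if_pos ⟨hav, hp⟩, if_neg (by omega)]
    by_cases hij : i = j
    · subst hij
      rw [if_pos ⟨by omega, hp⟩]
      simp
    · have hv : i.val ≠ j.val := fun h => hij (Fin.ext h)
      rw [if_neg (by omega)]
      simp [hij]
  · have hi1 : i.val - 1 < 2*n+2 := by have := i.isLt; omega
    have h1 : 1 ≤ i.val := by omega
    set a : Fin (2*n+2) := ⟨i.val-1, hi1⟩ with ha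
    have hav : a.val = i.val - 1 := rfl
    rw [Fintype.sum_eq_single a ?side]
    case side =>
      intro b hb
      have hbv : b.val ≠ i.val - 1 := fun h => hb (Fin.ext (h.trans hav.symm))
      rw [zBval, if_neg (by omega), if_neg (by omega), zero_mul]
    rw [zBval, zBval, if_neg (by omega), if_pos ⟨by omega, by omega⟩]
    by_cases hij : i = j
    · subst hij
      rw [if_pos ⟨by omega, by omega⟩]
      simp
    · have hv : i.val ≠ j.val := fun h => hij (Fin.ext h)
      rw [if_neg (by omega), if_neg (by omega)]
      simp [hij]

lemma expand (n : ℕ) (Γ : Matrix (Fin (2*n+2)) (Fin (2*n+2)) ℝ)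
    (hΓ : Γᵀ * zetaBig n * Γ = zetaBig n) (i j : Fin (2*n+2)) :
    (∑ l : Fin (2*n), (∑ k : Fin (2*n),
        Γ ⟨k.val, by have := k.isLt; omega⟩ i * zetaC n k l) * Γ ⟨l.val, by have := l.isLt; omega⟩ j)
      + Γ ⟨2*n, by omega⟩ i * Γ ⟨2*n+1, by omega⟩ j
      - Γ ⟨2*n+1, by omega⟩ i * Γ ⟨2*n, by omega⟩ j = zetaBig n i j := by
  conv_rhs => rw [← hΓ]
  rw [mul_apply]
  simp only [mul_apply, transpose_apply]
  rw [zsplit n (fun x => (∑ k, Γ k i * zetaBig n k x) * Γ x j)]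
  simp only [zsplit n (fun k => Γ k i * zetaBig n k _)]
  simp only [zB1, zB2, zB3, zB4, zB5, zB6, zB7, zB8, zB9,
    mul_zero, zero_mul, add_zero, zero_add, mul_one, mul_neg_one,
    Finset.sum_const_zero]
  ring

lemma sumswap (n : ℕ) (S : Matrix (Fin (2*n)) (Fin (2*n)) ℝ) (w : Fin (2*n) → ℝ)
    (b : Fin (2*n)) :
    -∑ l : Fin (2*n), (∑ k : Fin (2*n), S k b * zetaC n k l) * w l
      = ∑ k : Fin (2*n), (∑ l : Fin (2*n), w l * zetaC n l k) * S k b := by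
  have key : ∀ (k l : Fin (2*n)), w l * zetaC n l k * S k b = -(S k b * zetaC n k l * w l) := by
    intro k l; rw [zetaC_antisymm n k l]; ring
  simp only [Finset.sum_mul, key, Finset.sum_neg_distrib]
  rw [Finset.sum_comm]

theorem statement4 (n : ℕ) (hn : 1 ≤ n) (Γ : Matrix (Fin (2*n+2)) (Fin (2*n+2)) ℝ)
    (hΓ : Γᵀ * zetaBig n * Γ = zetaBig n)
    (hlast : ∀ j : Fin (2*n+2), Γ ⟨2*n+1, by omega⟩ j = if j.val = 2*n+1 then 1 else 0) :
    ∃ (S : Matrix (Fin (2*n)) (Fin (2*n)) ℝ) (w : Fin (2*n) → ℝ) (r : ℝ),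
      Sᵀ * zetaC n * S = zetaC n ∧ Γ = GamO n S w r := by
  have hZZ := zZZ n
  have h1 : (-(zetaBig n) * Γᵀ * zetaBig n) * Γ = 1 := by
    calc (-(zetaBig n) * Γᵀ * zetaBig n) * Γ
        = -(zetaBig n) * (Γᵀ * zetaBig n * Γ) := by
          simp only [Matrix.mul_assoc]
      _ = 1 := by rw [hΓ, Matrix.neg_mul, hZZ, neg_neg]
  have h2 : Γ * (-(zetaBig n) * Γᵀ * zetaBig n) = 1 := mul_eq_one_comm.mp h1
  have h3 : Γ * zetaBig n * Γᵀ * zetaBig n = -1 := by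
    have h : -(Γ * zetaBig n * Γᵀ * zetaBig n) = 1 := by
      rw [← h2]; simp only [Matrix.mul_assoc, Matrix.neg_mul, Matrix.mul_neg]
    exact neg_eq_iff_eq_neg.mp h
  have hTrel : Γᵀᵀ * zetaBig n * Γᵀ = zetaBig n := by
    rw [transpose_transpose]
    have h4 : (Γ * zetaBig n * Γᵀ) * (zetaBig n * zetaBig n) = -1 * zetaBig n := by
      rw [← Matrix.mul_assoc, h3]
    rw [hZZ, mul_neg_one, neg_one_mul] at h4
    exact neg_injective h4
  have e0 : ∀ (k : Fin (2*n)) (hk : k.val < 2*n+2),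
      Γ ⟨2*n+1, by omega⟩ (⟨k.val, hk⟩ : Fin (2*n+2)) = 0 := by
    intro k hk; rw [hlast]
    exact if_neg (show ¬((⟨k.val, hk⟩ : Fin (2*n+2)).val = 2*n+1) from by
      simp only [Fin.val_mk]; have := k.isLt; omega)
  -- column fact
  have hcol : ∀ j : Fin (2*n+2), Γ j ⟨2*n, by omega⟩ = if j.val = 2*n then 1 else 0 := by
    intro j
    have h := expand n Γᵀ hTrel ⟨2*n+1, by omega⟩ j
    simp only [transpose_apply] at h
    have hz : ∀ (l : Fin (2*n)),
        (∑ k : Fin (2*n), Γ ⟨2*n+1, by omega⟩ ⟨k.val, by have := k.isLt; omega⟩ * zetaC n k l)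
          = 0 :=
      fun l => Finset.sum_eq_zero (fun k _ => by rw [e0, zero_mul])
    have hA : Γ ⟨2*n+1, by omega⟩ ⟨2*n, by omega⟩ = 0 := by
      rw [hlast]; exact if_neg (show ¬(2*n = 2*n+1) from by omega)
    have hB : Γ ⟨2*n+1, by omega⟩ ⟨2*n+1, by omega⟩ = 1 := by
      rw [hlast]; exact if_pos rfl
    rw [hA, hB] at h
    simp only [hz, zero_mul, Finset.sum_const_zero, one_mul, zero_add] at h
    rw [zBval] at h
    rw [if_neg (show ¬(j.val = 2*n+1+1 ∧ (2*n+1) % 2 = 0) from by omega)] at h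
    by_cases hj : j.val = 2*n
    · rw [if_pos hj]
      rw [if_pos (show 2*n+1 = j.val+1 ∧ j.val % 2 = 0 from by omega)] at h
      linarith
    · rw [if_neg hj]
      rw [if_neg (show ¬(2*n+1 = j.val+1 ∧ j.val % 2 = 0) from by omega)] at h
      linarith
  -- row fact
  have hrow : ∀ b : Fin (2*n), Γ ⟨2*n, by omega⟩ ⟨b.val, by have := b.isLt; omega⟩
      = -∑ l : Fin (2*n),
          (∑ k : Fin (2*n), Γ ⟨k.val, by have := k.isLt; omega⟩ ⟨b.val, by have := b.isLt; omega⟩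
            * zetaC n k l) * Γ ⟨l.val, by have := l.isLt; omega⟩ ⟨2*n+1, by omega⟩ := by
    intro b
    have h := expand n Γ hΓ ⟨b.val, by have := b.isLt; omega⟩ ⟨2*n+1, by omega⟩
    rw [hlast, hlast, zB3] at h
    simp only [Fin.val_mk, if_true] at h
    rw [if_neg (by have := b.isLt; omega)] at h
    rw [mul_one, zero_mul, sub_zero] at h
    linarith
  refine ⟨Matrix.of (fun a b =>
      Γ ⟨a.val, by have := a.isLt; omega⟩ ⟨b.val, by have := b.isLt; omega⟩),
    fun a => Γ ⟨a.val, by have := a.isLt; omega⟩ ⟨2*n+1, by omega⟩,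
    Γ ⟨2*n, by omega⟩ ⟨2*n+1, by omega⟩ / 2, ?_, ?_⟩
  · ext a b
    have h := expand n Γ hΓ ⟨a.val, by have := a.isLt; omega⟩ ⟨b.val, by have := b.isLt; omega⟩
    rw [e0, e0, zB1, mul_zero, zero_mul, add_zero, sub_zero] at h
    rw [mul_apply]
    simp only [mul_apply, transpose_apply, of_apply]
    exact h
  · ext i j
    rw [show GamO n _ _ _ i j = _ from rfl]
    simp only [GamO, of_apply]
    by_cases hi : i.val < 2*n
    · rw [dif_pos hi]
      by_cases hj : j.val < 2*n
      · rw [dif_pos hj]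
      · rw [dif_neg hj]
        by_cases hj2 : j.val = 2*n
        · rw [if_pos hj2, show j = ⟨2*n, by omega⟩ from Fin.ext hj2, hcol,
            if_neg (by omega)]
        · rw [if_neg hj2, show j = ⟨2*n+1, by omega⟩ from
            Fin.ext (show j.val = 2*n+1 from by have := j.isLt; omega)]
    · rw [dif_neg hi]
      by_cases hi2 : i.val = 2*n
      · rw [if_pos hi2]
        have hieq : i = ⟨2*n, by omega⟩ := Fin.ext hi2
        by_cases hj : j.val < 2*n
        · rw [dif_pos hj, hieq]
          exact (hrow ⟨j.val, hj⟩).trans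
            (sumswap n (Matrix.of (fun a b =>
                Γ ⟨a.val, by have := a.isLt; omega⟩ ⟨b.val, by have := b.isLt; omega⟩))
              (fun a => Γ ⟨a.val, by have := a.isLt; omega⟩ ⟨2*n+1, by omega⟩)
              ⟨j.val, hj⟩)
        · rw [dif_neg hj]
          by_cases hj2 : j.val = 2*n
          · rw [if_pos hj2, show j = ⟨2*n, by omega⟩ from Fin.ext hj2, hieq, hcol,
              if_pos rfl]
          · rw [if_neg hj2, hieq, show j = ⟨2*n+1, by omega⟩ from
              Fin.ext (show j.val = 2*n+1 from by have := j.isLt; omega)]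
            ring_nf
      · rw [if_neg hi2, show i = ⟨2*n+1, by omega⟩ from
          Fin.ext (show i.val = 2*n+1 from by have := i.isLt; omega), hlast]

end
end

section
/- Let n ≥ 1. For every Σ ∈ Sp(2n), every w ∈ ℝ^{2n} and every r ∈ ℝ, the matrix Γ = Γ°(Σ, w, r) is invertible and satisfies both ΓᵀζΓ = ζ and ΓᵀηΓ = η. -/
open Matrix

noncomputable section

/-! ### Auxiliary machinery for `statement5` -/

/-- Generic even-size symplectic form matrix. -/
def zgen (N : ℕ) : Matrix (Fin N) (Fin N) ℝ :=
  Matrix.of fun i j =>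
    if j.val = i.val + 1 ∧ i.val % 2 = 0 then 1
    else if i.val = j.val + 1 ∧ j.val % 2 = 0 then -1 else 0

lemma zetaC_eq_zgen (n : ℕ) : zetaC n = zgen (2*n) := rfl
lemma zetaBig_eq_zgen (n : ℕ) : zetaBig n = zgen (2*n+2) := rfl

lemma zgen_transpose (N : ℕ) : (zgen N)ᵀ = -(zgen N) := by
  ext i j
  simp only [zgen, transpose_apply, Matrix.neg_apply, of_apply]
  split_ifs <;> (try norm_num) <;> omega

lemma zgen_mul_self (N : ℕ) (hN : N % 2 = 0) : zgen N * zgen N = -1 := by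
  ext i j
  rw [mul_apply]
  have hi := i.isLt
  by_cases hpar : i.val % 2 = 0
  · have hlt : i.val + 1 < N := by omega
    rw [Finset.sum_eq_single (⟨i.val+1, hlt⟩ : Fin N)]
    · simp only [zgen, of_apply, Matrix.neg_apply, one_apply, Fin.ext_iff, true_and, and_true]
      split_ifs <;> (try norm_num) <;> omega
    · intro b _ hb
      have hb' : b.val ≠ i.val + 1 := fun h => hb (Fin.ext h)
      have : zgen N i b = 0 := by
        simp only [zgen, of_apply]
        split_ifs <;> (try rfl) <;> omega
      rw [this, zero_mul]
    · intro h; exact absurd (Finset.mem_univ _) h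
  · have hlt : i.val - 1 < N := by omega
    rw [Finset.sum_eq_single (⟨i.val-1, hlt⟩ : Fin N)]
    · simp only [zgen, of_apply, Matrix.neg_apply, one_apply, Fin.ext_iff, true_and, and_true]
      split_ifs <;> (try norm_num) <;> omega
    · intro b _ hb
      have hb' : b.val ≠ i.val - 1 := fun h => hb (Fin.ext h)
      have : zgen N i b = 0 := by
        simp only [zgen, of_apply]
        split_ifs <;> (try rfl) <;> omega
      rw [this, zero_mul]
    · intro h; exact absurd (Finset.mem_univ _) h

lemma zetaC_transpose (n : ℕ) : (zetaC n)ᵀ = -(zetaC n) := zgen_transpose (2*n)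

lemma quad_zero {N : ℕ} (A : Matrix (Fin N) (Fin N) ℝ) (hA : Aᵀ = -A) (w : Fin N → ℝ) :
    (w ᵥ* A) ⬝ᵥ w = 0 := by
  have h : ∀ a b, A b a = - A a b := fun a b => by
    have := congrFun (congrFun hA a) b
    simpa [transpose_apply, neg_apply] using this
  have key : (w ᵥ* A) ⬝ᵥ w = -((w ᵥ* A) ⬝ᵥ w) := by
    calc (w ᵥ* A) ⬝ᵥ w = ∑ b, ∑ a, w a * A a b * w b := by
          simp [dotProduct, vecMul, Finset.sum_mul]
      _ = ∑ a, ∑ b, w a * A a b * w b := Finset.sum_comm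
      _ = ∑ a, ∑ b, -(w b * A b a * w a) := by
          refine Finset.sum_congr rfl fun a _ => Finset.sum_congr rfl fun b _ => ?_
          rw [h a b]; ring
      _ = -(∑ a, ∑ b, w b * A b a * w a) := by simp
      _ = -(∑ b, ∑ a, w a * A a b * w b) := by rw [Finset.sum_comm]
      _ = -((w ᵥ* A) ⬝ᵥ w) := by simp [dotProduct, vecMul, Finset.sum_mul]
  linarith

/-- The 2×2 symplectic block `J`. -/
def Jm : Matrix (Fin 2) (Fin 2) ℝ := !![0, 1; -1, 0]
/-- The 2×2 corner block of `η`. -/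
def E2 : Matrix (Fin 2) (Fin 2) ℝ := !![0, 0; 0, 1]
/-- The top-right block of `Γ°`. -/
def Bm (n : ℕ) (w : Fin (2*n) → ℝ) : Matrix (Fin (2*n)) (Fin 2) ℝ :=
  Matrix.of fun i j => if j = 0 then 0 else w i
/-- The bottom-left block of `Γ°`. -/
def Cm (n : ℕ) (S : Matrix (Fin (2*n)) (Fin (2*n)) ℝ) (w : Fin (2*n) → ℝ) :
    Matrix (Fin 2) (Fin (2*n)) ℝ :=
  Matrix.of fun j a => if j = 0 then (w ᵥ* zetaC n ᵥ* S) a else 0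
/-- The bottom-right block of `Γ°`. -/
def Dm (r : ℝ) : Matrix (Fin 2) (Fin 2) ℝ := !![1, 2*r; 0, 1]

lemma gam_blocks (n : ℕ) (S : Matrix (Fin (2*n)) (Fin (2*n)) ℝ) (w : Fin (2*n) → ℝ) (r : ℝ) :
    GamO n S w r = (fromBlocks S (Bm n w) (Cm n S w) (Dm r)).submatrix
      finSumFinEquiv.symm finSumFinEquiv.symm := by
  ext i j
  obtain ⟨p, rfl⟩ := finSumFinEquiv.surjective i
  obtain ⟨q, rfl⟩ := finSumFinEquiv.surjective j
  rw [submatrix_apply, Equiv.symm_apply_apply, Equiv.symm_apply_apply]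
  rcases p with a | b <;> rcases q with c | d
  · have ha := a.isLt; have hc := c.isLt
    simp [GamO, fromBlocks, finSumFinEquiv_apply_left, Fin.castAdd, Fin.castLE, ha, hc]
  · have ha := a.isLt
    fin_cases d <;>
      simp [GamO, fromBlocks, Bm, finSumFinEquiv_apply_left, finSumFinEquiv_apply_right,
        Fin.castAdd, Fin.castLE, Fin.natAdd, ha] <;> omega
  · have hc := c.isLt
    fin_cases b <;>
      simp [GamO, fromBlocks, Cm, finSumFinEquiv_apply_left, finSumFinEquiv_apply_right,
        Fin.castAdd, Fin.castLE, Fin.natAdd, hc] <;> omega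
  · fin_cases b <;> fin_cases d <;>
      simp [GamO, fromBlocks, Dm, finSumFinEquiv_apply_right, Fin.natAdd] <;> omega

lemma zeta_blocks (n : ℕ) :
    zetaBig n = (fromBlocks (zetaC n) 0 0 Jm).submatrix
      finSumFinEquiv.symm finSumFinEquiv.symm := by
  ext i j
  obtain ⟨p, rfl⟩ := finSumFinEquiv.surjective i
  obtain ⟨q, rfl⟩ := finSumFinEquiv.surjective j
  rw [submatrix_apply, Equiv.symm_apply_apply, Equiv.symm_apply_apply]
  rcases p with a | b <;> rcases q with c | d
  · have ha := a.isLt; have hc := c.isLt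
    simp [zetaBig, zetaC, fromBlocks, finSumFinEquiv_apply_left, Fin.castAdd, Fin.castLE]
  · have ha := a.isLt
    fin_cases d <;>
      (simp [zetaBig, fromBlocks, finSumFinEquiv_apply_left, finSumFinEquiv_apply_right,
        Fin.castAdd, Fin.castLE, Fin.natAdd]
       try split_ifs <;> (try norm_num) <;> omega
       try omega)
  · have hc := c.isLt
    fin_cases b <;>
      (simp [zetaBig, fromBlocks, finSumFinEquiv_apply_left, finSumFinEquiv_apply_right,
        Fin.castAdd, Fin.castLE, Fin.natAdd]
       try split_ifs <;> (try norm_num) <;> omega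
       try omega)
  · fin_cases b <;> fin_cases d <;>
      (simp [zetaBig, Jm, fromBlocks, finSumFinEquiv_apply_right, Fin.natAdd]
       try split_ifs <;> (try norm_num) <;> omega
       try omega)

lemma eta_blocks (n : ℕ) :
    etaM n = (fromBlocks 0 0 0 E2).submatrix finSumFinEquiv.symm finSumFinEquiv.symm := by
  ext i j
  obtain ⟨p, rfl⟩ := finSumFinEquiv.surjective i
  obtain ⟨q, rfl⟩ := finSumFinEquiv.surjective j
  rw [submatrix_apply, Equiv.symm_apply_apply, Equiv.symm_apply_apply]
  rcases p with a | b <;> rcases q with c | d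
  · have ha := a.isLt; have hc := c.isLt
    simp [etaM, fromBlocks, finSumFinEquiv_apply_left, Fin.castAdd, Fin.castLE]
    omega
  · have ha := a.isLt
    fin_cases d <;>
      (simp [etaM, fromBlocks, finSumFinEquiv_apply_left, finSumFinEquiv_apply_right,
        Fin.castAdd, Fin.castLE, Fin.natAdd]
       try omega)
  · have hc := c.isLt
    fin_cases b <;>
      (simp [etaM, fromBlocks, finSumFinEquiv_apply_left, finSumFinEquiv_apply_right,
        Fin.castAdd, Fin.castLE, Fin.natAdd]
       try omega)
  · fin_cases b <;> fin_cases d <;>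
      simp [etaM, E2, fromBlocks, finSumFinEquiv_apply_right, Fin.natAdd]

section CoreBlocks

variable {n : ℕ} {m : Type*} [Fintype m] [DecidableEq m]

lemma MB_mul (M : Matrix m (Fin (2*n)) ℝ) (w : Fin (2*n) → ℝ) :
    M * Bm n w = Matrix.of fun i j => if j = 0 then 0 else (M *ᵥ w) i := by
  ext i j
  fin_cases j <;> simp [Bm, mul_apply, mulVec, dotProduct]

lemma Bt_mul (M : Matrix (Fin (2*n)) m ℝ) (w : Fin (2*n) → ℝ) :
    (Bm n w)ᵀ * M = Matrix.of fun j a => if j = 0 then 0 else (w ᵥ* M) a := by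
  ext j a
  fin_cases j <;> simp [Bm, mul_apply, vecMul, dotProduct]

lemma Ct_mul (S : Matrix (Fin (2*n)) (Fin (2*n)) ℝ) (w : Fin (2*n) → ℝ)
    (M : Matrix (Fin 2) m ℝ) :
    (Cm n S w)ᵀ * M = Matrix.of fun a j => (w ᵥ* zetaC n ᵥ* S) a * M 0 j := by
  ext a j
  simp [Cm, mul_apply, Fin.sum_univ_two]

lemma mul_C (S : Matrix (Fin (2*n)) (Fin (2*n)) ℝ) (w : Fin (2*n) → ℝ)
    (M : Matrix m (Fin 2) ℝ) :
    M * Cm n S w = Matrix.of fun j a => M j 0 * (w ᵥ* zetaC n ᵥ* S) a := by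
  ext j a
  simp [Cm, mul_apply, Fin.sum_univ_two]

variable (S : Matrix (Fin (2*n)) (Fin (2*n)) ℝ) (w : Fin (2*n) → ℝ) (r : ℝ)

lemma key_vec : (Sᵀ * zetaC n) *ᵥ w = -(w ᵥ* zetaC n ᵥ* S) := by
  rw [← vecMul_transpose, transpose_mul, transpose_transpose, zetaC_transpose, neg_mul,
    vecMul_neg, vecMul_vecMul]

lemma block_TL : Sᵀ * zetaC n * S + (Cm n S w)ᵀ * Jm * Cm n S w = Sᵀ * zetaC n * S := by
  have h : (Cm n S w)ᵀ * Jm * Cm n S w = 0 := by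
    have e : (Cm n S w)ᵀ * Jm * Cm n S w = (Cm n S w)ᵀ * (Jm * Cm n S w) :=
      Matrix.mul_assoc _ _ _
    rw [e, mul_C, Ct_mul]
    ext a b
    simp [Jm]
  rw [h, add_zero]

lemma block_TR : Sᵀ * zetaC n * Bm n w + (Cm n S w)ᵀ * Jm * Dm r = 0 := by
  have hJD0 : (Jm * Dm r) 0 0 = 0 := by simp [Jm, Dm, mul_apply, Fin.sum_univ_two, transpose_apply, Matrix.vecHead, Matrix.vecTail]
  have hJD1 : (Jm * Dm r) 0 1 = 1 := by simp [Jm, Dm, mul_apply, Fin.sum_univ_two, transpose_apply, Matrix.vecHead, Matrix.vecTail]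
  have e2 : (Cm n S w)ᵀ * Jm * Dm r = (Cm n S w)ᵀ * (Jm * Dm r) := Matrix.mul_assoc _ _ _
  rw [MB_mul (Sᵀ * zetaC n) w, e2, Ct_mul]
  ext a j
  have hkey := congrFun (key_vec S w) a
  simp only [Pi.neg_apply] at hkey
  fin_cases j
  · simp [hJD0]
  · simp [hJD1, hkey]

lemma block_BL : (Bm n w)ᵀ * zetaC n * S + (Dm r)ᵀ * Jm * Cm n S w = 0 := by
  have hDJ0 : ((Dm r)ᵀ * Jm) 0 0 = 0 := by simp [Jm, Dm, mul_apply, Fin.sum_univ_two, transpose_apply, Matrix.vecHead, Matrix.vecTail]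
  have hDJ1 : ((Dm r)ᵀ * Jm) 1 0 = -1 := by simp [Jm, Dm, mul_apply, Fin.sum_univ_two, transpose_apply, Matrix.vecHead, Matrix.vecTail]
  have e : (Bm n w)ᵀ * zetaC n * S = (Bm n w)ᵀ * (zetaC n * S) := Matrix.mul_assoc _ _ _
  rw [e, Bt_mul, mul_C, ← vecMul_vecMul]
  ext j a
  fin_cases j
  · simp [hDJ0]
  · simp [hDJ1]

lemma block_BR : (Bm n w)ᵀ * zetaC n * Bm n w + (Dm r)ᵀ * Jm * Dm r = Jm := by
  have hq : (w ᵥ* zetaC n) ⬝ᵥ w = 0 := quad_zero _ (zetaC_transpose n) w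
  have hq' : w ⬝ᵥ (zetaC n *ᵥ w) = 0 := by rw [dotProduct_mulVec]; exact hq
  simp only [dotProduct] at hq'
  have h1 : (Bm n w)ᵀ * zetaC n * Bm n w = 0 := by
    have e : (Bm n w)ᵀ * zetaC n * Bm n w = (Bm n w)ᵀ * (zetaC n * Bm n w) :=
      Matrix.mul_assoc _ _ _
    rw [e, MB_mul, Bt_mul]
    ext j k
    fin_cases j <;> fin_cases k <;> simp [vecMul, dotProduct, hq']
  have h2 : (Dm r)ᵀ * Jm * Dm r = Jm := by
    ext i j
    fin_cases i <;> fin_cases j <;>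
      (simp [Dm, Jm, mul_apply, Fin.sum_univ_two, transpose_apply, Matrix.vecHead, Matrix.vecTail]; try ring)
  rw [h1, h2, zero_add]

lemma hCtE : (Cm n S w)ᵀ * E2 = 0 := by
  rw [Ct_mul]
  ext a j
  fin_cases j <;> simp [E2]

lemma hDtE : (Dm r)ᵀ * E2 = E2 := by
  ext i j
  fin_cases i <;> fin_cases j <;> simp [Dm, E2, mul_apply, Fin.sum_univ_two, transpose_apply, Matrix.vecHead, Matrix.vecTail]

lemma hE2C : E2 * Cm n S w = 0 := by
  rw [mul_C]
  ext j a
  fin_cases j <;> simp [E2]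

lemma hE2D : E2 * Dm r = E2 := by
  ext i j
  fin_cases i <;> fin_cases j <;> simp [Dm, E2, mul_apply, Fin.sum_univ_two, transpose_apply, Matrix.vecHead, Matrix.vecTail]

lemma core_zeta (hS : Sᵀ * zetaC n * S = zetaC n) :
    (fromBlocks S (Bm n w) (Cm n S w) (Dm r))ᵀ * fromBlocks (zetaC n) 0 0 Jm *
      fromBlocks S (Bm n w) (Cm n S w) (Dm r) = fromBlocks (zetaC n) 0 0 Jm := by
  rw [fromBlocks_transpose, fromBlocks_multiply, fromBlocks_multiply]
  simp only [Matrix.mul_zero, Matrix.zero_mul, add_zero, zero_add]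
  rw [block_TL, hS, block_TR, block_BL, block_BR]

lemma core_eta :
    (fromBlocks S (Bm n w) (Cm n S w) (Dm r))ᵀ * fromBlocks 0 0 0 E2 *
      fromBlocks S (Bm n w) (Cm n S w) (Dm r) = fromBlocks 0 0 0 E2 := by
  rw [fromBlocks_transpose, fromBlocks_multiply, fromBlocks_multiply]
  simp only [Matrix.mul_zero, Matrix.zero_mul, add_zero, zero_add]
  rw [hCtE, hDtE, hE2C, hE2D]
  simp only [Matrix.zero_mul]

end CoreBlocks


theorem statement5 (n : ℕ) (hn : 1 ≤ n) (S : Matrix (Fin (2*n)) (Fin (2*n)) ℝ)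
    (hS : Sᵀ * zetaC n * S = zetaC n) (w : Fin (2*n) → ℝ) (r : ℝ) :
    IsUnit (GamO n S w r) ∧
    (GamO n S w r)ᵀ * zetaBig n * GamO n S w r = zetaBig n ∧
    (GamO n S w r)ᵀ * etaM n * GamO n S w r = etaM n := by
  have h2 : (GamO n S w r)ᵀ * zetaBig n * GamO n S w r = zetaBig n := by
    rw [gam_blocks, zeta_blocks, transpose_submatrix, submatrix_mul_equiv,
      submatrix_mul_equiv, core_zeta S w r hS]
  have h3 : (GamO n S w r)ᵀ * etaM n * GamO n S w r = etaM n := by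
    rw [gam_blocks, eta_blocks, transpose_submatrix, submatrix_mul_equiv,
      submatrix_mul_equiv, core_eta S w r]
  refine ⟨?_, h2, h3⟩
  have hsq : zetaBig n * zetaBig n = -1 := by
    rw [zetaBig_eq_zgen]; exact zgen_mul_self _ (by omega)
  have h1 : (-(zetaBig n) * ((GamO n S w r)ᵀ * zetaBig n)) * GamO n S w r = 1 := by
    rw [mul_assoc, h2, neg_mul, hsq, neg_neg]
  exact (Matrix.isUnit_iff_isUnit_det _).mpr (Matrix.isUnit_det_of_left_inverse h1)


end
end

section
/- Let n ≥ 1 and let T = diag(1_{2n}, −1, −1) be the (2n+2)×(2n+2) time-reversal matrix. Then T satisfies TᵀζT = ζ and TᵀηT = η, T² = 1, and for every Σ ∈ Sp(2n), w ∈ ℝ^{2n}, r ∈ ℝ one has T·Γ°(Σ, w, r)·T⁻¹ = Γ°(Σ, −w, r). Consequently the set {Γ°(Σ, w, r)·Tᵏ : Σ ∈ Sp(2n), w ∈ ℝ^{2n}, r ∈ ℝ, k ∈ {0,1}} is a subgroup of GL(2n+2, ℝ) in which the Jacobi group {Γ°(Σ, w, r)} is a normal subgroup of index 2. -/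
open Matrix

noncomputable section

section Aux

variable {n : ℕ} {S S' : Matrix (Fin (2*n)) (Fin (2*n)) ℝ} {w w' : Fin (2*n) → ℝ} {r r' : ℝ}

lemma T_sq (n : ℕ) : Tmat n * Tmat n = 1 := by
  rw [Tmat, Matrix.diagonal_mul_diagonal]
  ext i j
  simp [Matrix.diagonal, Matrix.one_apply]
  split_ifs <;> simp

lemma TZT (n : ℕ) : (Tmat n)ᵀ * zetaBig n * Tmat n = zetaBig n := by
  ext i j
  rw [Tmat, Matrix.diagonal_transpose]
  rw [Matrix.mul_diagonal, Matrix.diagonal_mul]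
  simp only [zetaBig, Matrix.of_apply]
  have := i.isLt; have := j.isLt
  split_ifs <;> (try push_neg at *) <;> first | ring1 | (exfalso; omega)

lemma TET (n : ℕ) : (Tmat n)ᵀ * etaM n * Tmat n = etaM n := by
  ext i j
  rw [Tmat, Matrix.diagonal_transpose]
  rw [Matrix.mul_diagonal, Matrix.diagonal_mul]
  simp only [etaM, Matrix.of_apply]
  split_ifs <;> (try push_neg at *) <;> first | ring1 | (exfalso; omega)

lemma T_conj (n : ℕ) (S : Matrix (Fin (2*n)) (Fin (2*n)) ℝ) (w : Fin (2*n) → ℝ) (r : ℝ) :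
    Tmat n * GamO n S w r * Tmat n = GamO n S (-w) r := by
  ext i j
  rw [Tmat, Matrix.mul_diagonal, Matrix.diagonal_mul]
  simp only [GamO, Matrix.of_apply, Matrix.neg_vecMul, Pi.neg_apply]
  split_ifs <;> first | ring1 | (exfalso; omega)

lemma gam_one (n : ℕ) : GamO n 1 0 0 = 1 := by
  ext i j
  simp only [GamO, Matrix.of_apply, Matrix.zero_vecMul, Matrix.vecMul_zero, Matrix.one_apply,
    Pi.zero_apply, Fin.mk.injEq, Fin.ext_iff]
  split_ifs <;> first | ring1 | (exfalso; omega)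

lemma zetaC_sq (n : ℕ) : zetaC n * zetaC n = -1 := by
  ext i j
  rw [Matrix.mul_apply]
  have hi := i.isLt
  rcases Nat.even_or_odd i.val with he | ho
  · have h2 : i.val % 2 = 0 := Nat.even_iff.mp he
    have hlt : i.val + 1 < 2*n := by omega
    rw [Finset.sum_eq_single (⟨i.val+1, hlt⟩ : Fin (2*n))]
    · simp only [zetaC, Matrix.of_apply, Matrix.neg_apply, Matrix.one_apply, Fin.ext_iff,
        true_and, and_true]
      split_ifs <;> first | ring1 | (exfalso; omega)
    · intro k _ hk
      have hk' : k.val ≠ i.val + 1 := fun h => hk (Fin.ext h)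
      simp only [zetaC, Matrix.of_apply]
      split_ifs <;> first | ring1 | (exfalso; omega)
    · intro h; exact absurd (Finset.mem_univ _) h
  · have h2 : i.val % 2 = 1 := Nat.odd_iff.mp ho
    have hpos : 1 ≤ i.val := by omega
    have hlt : i.val - 1 < 2*n := by omega
    rw [Finset.sum_eq_single (⟨i.val-1, hlt⟩ : Fin (2*n))]
    · simp only [zetaC, Matrix.of_apply, Matrix.neg_apply, Matrix.one_apply, Fin.ext_iff,
        true_and, and_true]
      split_ifs <;> first | ring1 | (exfalso; omega)
    · intro k _ hk
      have hk' : k.val ≠ i.val - 1 := fun h => hk (Fin.ext h)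
      simp only [zetaC, Matrix.of_apply]
      split_ifs <;> first | ring1 | (exfalso; omega)
    · intro h; exact absurd (Finset.mem_univ _) h

lemma gA {i j : Fin (2*n+2)} (hi : i.val < 2*n) (hj : j.val < 2*n) :
    GamO n S w r i j = S ⟨i.val, hi⟩ ⟨j.val, hj⟩ := by
  simp only [GamO, Matrix.of_apply, dif_pos hi, dif_pos hj]
lemma gB {i j : Fin (2*n+2)} (hi : i.val < 2*n) (hj : j.val = 2*n) :
    GamO n S w r i j = 0 := by
  simp only [GamO, Matrix.of_apply, dif_pos hi, dif_neg (by omega : ¬ j.val < 2*n), if_pos hj]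
lemma gC {i j : Fin (2*n+2)} (hi : i.val < 2*n) (hj : j.val = 2*n+1) :
    GamO n S w r i j = w ⟨i.val, hi⟩ := by
  simp only [GamO, Matrix.of_apply, dif_pos hi, dif_neg (by omega : ¬ j.val < 2*n),
    if_neg (by omega : ¬ j.val = 2*n)]
lemma gD {i j : Fin (2*n+2)} (hi : i.val = 2*n) (hj : j.val < 2*n) :
    GamO n S w r i j = Matrix.vecMul (Matrix.vecMul w (zetaC n)) S ⟨j.val, hj⟩ := by
  simp only [GamO, Matrix.of_apply, dif_neg (by omega : ¬ i.val < 2*n), if_pos hi, dif_pos hj]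
lemma gE {i j : Fin (2*n+2)} (hi : i.val = 2*n) (hj : j.val = 2*n) :
    GamO n S w r i j = 1 := by
  simp only [GamO, Matrix.of_apply, dif_neg (by omega : ¬ i.val < 2*n), if_pos hi,
    dif_neg (by omega : ¬ j.val < 2*n), if_pos hj]
lemma gF {i j : Fin (2*n+2)} (hi : i.val = 2*n) (hj : j.val = 2*n+1) :
    GamO n S w r i j = 2*r := by
  simp only [GamO, Matrix.of_apply, dif_neg (by omega : ¬ i.val < 2*n), if_pos hi,
    dif_neg (by omega : ¬ j.val < 2*n), if_neg (by omega : ¬ j.val = 2*n)]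
lemma gG {i j : Fin (2*n+2)} (hi : i.val = 2*n+1) :
    GamO n S w r i j = if j.val = 2*n+1 then 1 else 0 := by
  simp only [GamO, Matrix.of_apply, dif_neg (by omega : ¬ i.val < 2*n),
    if_neg (by omega : ¬ i.val = 2*n)]

lemma sum_split (f : Fin (2*n+2) → ℝ) :
    ∑ k, f k = (∑ k : Fin (2*n), f ⟨k.val, by omega⟩) + f ⟨2*n, by omega⟩
      + f ⟨2*n+1, by omega⟩ := by
  rw [Fin.sum_univ_castSucc, Fin.sum_univ_castSucc]
  rfl

lemma sp_vec (hS : Sᵀ * zetaC n * S = zetaC n) :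
    Matrix.vecMul (Matrix.vecMul (S.mulVec w' + w) (zetaC n)) (S*S')
      = Matrix.vecMul (Matrix.vecMul w (zetaC n)) (S*S')
        + Matrix.vecMul (Matrix.vecMul w' (zetaC n)) S' := by
  rw [Matrix.add_vecMul, Matrix.add_vecMul, add_comm]
  congr 1
  rw [← Matrix.vecMul_transpose, Matrix.vecMul_vecMul, Matrix.vecMul_vecMul,
    Matrix.vecMul_vecMul, ← Matrix.mul_assoc, ← Matrix.mul_assoc, hS, ← Matrix.vecMul_vecMul]

lemma vecMul_apply' (v : Fin (2*n) → ℝ) (M : Matrix (Fin (2*n)) (Fin (2*n)) ℝ) (j : Fin (2*n)) :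
    Matrix.vecMul v M j = ∑ k, v k * M k j := by
  simp [Matrix.vecMul, dotProduct]

lemma gam_mul (hS : Sᵀ * zetaC n * S = zetaC n) :
    GamO n S w r * GamO n S' w' r' =
      GamO n (S*S') (S.mulVec w' + w)
        (r + r' + (Matrix.vecMul (Matrix.vecMul w (zetaC n)) S ⬝ᵥ w')/2) := by
  ext i j
  rw [Matrix.mul_apply, sum_split]
  by_cases hi : i.val < 2*n
  · by_cases hj : j.val < 2*n
    · have e : ∀ k : Fin (2*n), GamO n S w r i ⟨k.val, by omega⟩
          * GamO n S' w' r' ⟨k.val, by omega⟩ j = S ⟨i.val, hi⟩ k * S' k ⟨j.val, hj⟩ :=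
        fun k => by rw [gA hi k.isLt, gA k.isLt hj]
      rw [Finset.sum_congr rfl (fun k _ => e k), gB hi rfl, gC hi rfl,
        gG (i := ⟨2*n+1, by omega⟩) rfl, if_neg (by omega : ¬ j.val = 2*n+1),
        gA hi hj, Matrix.mul_apply]
      ring
    · by_cases hj2 : j.val = 2*n
      · have e : ∀ k : Fin (2*n), GamO n S w r i ⟨k.val, by omega⟩
            * GamO n S' w' r' ⟨k.val, by omega⟩ j = 0 :=
          fun k => by rw [gB k.isLt hj2, mul_zero]
        rw [Finset.sum_congr rfl (fun k _ => e k), gB hi rfl, gC hi rfl,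
          gG (i := ⟨2*n+1, by omega⟩) rfl, if_neg (by omega : ¬ j.val = 2*n+1),
          gB hi hj2]
        simp
      · have hj3 : j.val = 2*n+1 := by have := j.isLt; omega
        have e : ∀ k : Fin (2*n), GamO n S w r i ⟨k.val, by omega⟩
            * GamO n S' w' r' ⟨k.val, by omega⟩ j = S ⟨i.val, hi⟩ k * w' k :=
          fun k => by rw [gA hi k.isLt, gC k.isLt hj3]
        rw [Finset.sum_congr rfl (fun k _ => e k), gB hi rfl, gC hi rfl,
          gG (i := ⟨2*n+1, by omega⟩) rfl, if_pos hj3, gC hi hj3, Pi.add_apply]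
        have : S.mulVec w' ⟨i.val, hi⟩ = ∑ k, S ⟨i.val, hi⟩ k * w' k := by
          simp [Matrix.mulVec, dotProduct]
        rw [this]
        ring
  · by_cases hi2 : i.val = 2*n
    · by_cases hj : j.val < 2*n
      · have e : ∀ k : Fin (2*n), GamO n S w r i ⟨k.val, by omega⟩
            * GamO n S' w' r' ⟨k.val, by omega⟩ j
            = Matrix.vecMul (Matrix.vecMul w (zetaC n)) S k * S' k ⟨j.val, hj⟩ :=
          fun k => by rw [gD hi2 k.isLt, gA k.isLt hj]
        rw [Finset.sum_congr rfl (fun k _ => e k), gE hi2 rfl, gF hi2 rfl,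
          gD (i := ⟨2*n, by omega⟩) rfl hj,
          gG (i := ⟨2*n+1, by omega⟩) rfl, if_neg (by omega : ¬ j.val = 2*n+1),
          gD hi2 hj, sp_vec hS, Pi.add_apply,
          ← Matrix.vecMul_vecMul (Matrix.vecMul w (zetaC n)) S S',
          vecMul_apply' (Matrix.vecMul (Matrix.vecMul w (zetaC n)) S) S' ⟨j.val, hj⟩]
        ring
      · by_cases hj2 : j.val = 2*n
        · have e : ∀ k : Fin (2*n), GamO n S w r i ⟨k.val, by omega⟩
              * GamO n S' w' r' ⟨k.val, by omega⟩ j = 0 :=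
            fun k => by rw [gB k.isLt hj2, mul_zero]
          rw [Finset.sum_congr rfl (fun k _ => e k), gE hi2 rfl, gF hi2 rfl,
            gE (i := ⟨2*n, by omega⟩) rfl hj2,
            gG (i := ⟨2*n+1, by omega⟩) rfl, if_neg (by omega : ¬ j.val = 2*n+1),
            gE hi2 hj2]
          simp
        · have hj3 : j.val = 2*n+1 := by have := j.isLt; omega
          have e : ∀ k : Fin (2*n), GamO n S w r i ⟨k.val, by omega⟩
              * GamO n S' w' r' ⟨k.val, by omega⟩ j
              = Matrix.vecMul (Matrix.vecMul w (zetaC n)) S k * w' k :=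
            fun k => by rw [gD hi2 k.isLt, gC k.isLt hj3]
          rw [Finset.sum_congr rfl (fun k _ => e k), gE hi2 rfl, gF hi2 rfl,
            gF (i := ⟨2*n, by omega⟩) rfl hj3,
            gG (i := ⟨2*n+1, by omega⟩) rfl, if_pos hj3, gF hi2 hj3]
          simp only [dotProduct]
          ring
    · have hi3 : i.val = 2*n+1 := by have := i.isLt; omega
      have e : ∀ k : Fin (2*n), GamO n S w r i ⟨k.val, by omega⟩
          * GamO n S' w' r' ⟨k.val, by omega⟩ j = 0 :=
        fun k => by
          rw [gG hi3, if_neg (show ¬ (k.val = 2*n+1) by have := k.isLt; omega), zero_mul]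
      rw [Finset.sum_congr rfl (fun k _ => e k),
        gG (j := ⟨2*n, by omega⟩) hi3, if_neg (show ¬ (2*n = 2*n+1) by omega),
        gG (j := ⟨2*n+1, by omega⟩) hi3, if_pos (show 2*n+1 = 2*n+1 from rfl),
        gG (i := ⟨2*n+1, by omega⟩) rfl, gG hi3]
      simp

lemma symp_mul (hS : Sᵀ * zetaC n * S = zetaC n) (hS' : S'ᵀ * zetaC n * S' = zetaC n) :
    (S*S')ᵀ * zetaC n * (S*S') = zetaC n := by
  rw [Matrix.transpose_mul]
  simp only [Matrix.mul_assoc]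
  have h1 : Sᵀ * (zetaC n * (S * S')) = zetaC n * S' := by
    rw [← Matrix.mul_assoc, ← Matrix.mul_assoc, hS]
  rw [h1, ← Matrix.mul_assoc, hS']

lemma symp_one : (1 : Matrix (Fin (2*n)) (Fin (2*n)) ℝ)ᵀ * zetaC n * 1 = zetaC n := by
  simp

lemma si_left (hS : Sᵀ * zetaC n * S = zetaC n) :
    (-(zetaC n) * Sᵀ * zetaC n) * S = 1 := by
  have h1 : (-(zetaC n) * Sᵀ * zetaC n) * S = -(zetaC n) * (Sᵀ * zetaC n * S) := by
    simp only [Matrix.mul_assoc]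
  rw [h1, hS, Matrix.neg_mul, zetaC_sq, neg_neg]

lemma si_right (hS : Sᵀ * zetaC n * S = zetaC n) :
    S * (-(zetaC n) * Sᵀ * zetaC n) = 1 :=
  mul_eq_one_comm.mp (si_left hS)

lemma symp_inv_symp {B : Matrix (Fin (2*n)) (Fin (2*n)) ℝ}
    (hS : Sᵀ * zetaC n * S = zetaC n) (hB : S * B = 1) :
    Bᵀ * zetaC n * B = zetaC n := by
  calc Bᵀ * zetaC n * B
      = Bᵀ * (Sᵀ * zetaC n * S) * B := by rw [hS]
    _ = (S*B)ᵀ * zetaC n * (S*B) := by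
        simp only [Matrix.transpose_mul, Matrix.mul_assoc]
    _ = zetaC n := by rw [hB]; simp

/-- Existence of a two-sided inverse of `GamO` within the Jacobi group. -/
lemma gam_inv_ex (hS : Sᵀ * zetaC n * S = zetaC n) :
    ∃ S₁ w₁ r₁, (S₁ᵀ * zetaC n * S₁ = zetaC n) ∧
      GamO n S w r * GamO n S₁ w₁ r₁ = 1 ∧ GamO n S₁ w₁ r₁ * GamO n S w r = 1 := by
  set Si : Matrix (Fin (2*n)) (Fin (2*n)) ℝ := -(zetaC n) * Sᵀ * zetaC n with hSi
  set wi : Fin (2*n) → ℝ := -(Si.mulVec w) with hwi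
  set ri : ℝ := -(r + (Matrix.vecMul (Matrix.vecMul w (zetaC n)) S ⬝ᵥ wi)/2) with hri
  have hsymp : Siᵀ * zetaC n * Si = zetaC n := symp_inv_symp hS (si_right hS)
  have hright : GamO n S w r * GamO n Si wi ri = 1 := by
    rw [gam_mul hS, si_right hS]
    have hv : S.mulVec wi + w = 0 := by
      rw [hwi, Matrix.mulVec_neg, Matrix.mulVec_mulVec, si_right hS, Matrix.one_mulVec]
      simp
    have hr : r + ri + (Matrix.vecMul (Matrix.vecMul w (zetaC n)) S ⬝ᵥ wi)/2 = 0 := by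
      rw [hri]; ring
    rw [hv, hr, gam_one]
  exact ⟨Si, wi, ri, hsymp, hright, mul_eq_one_comm.mp hright⟩

lemma T_swap (n : ℕ) (S : Matrix (Fin (2*n)) (Fin (2*n)) ℝ) (w : Fin (2*n) → ℝ) (r : ℝ) :
    Tmat n * GamO n S w r = GamO n S (-w) r * Tmat n := by
  calc Tmat n * GamO n S w r
      = Tmat n * GamO n S w r * (Tmat n * Tmat n) := by rw [T_sq, mul_one]
    _ = (Tmat n * GamO n S w r * Tmat n) * Tmat n := by
        simp only [mul_assoc]
    _ = GamO n S (-w) r * Tmat n := by rw [T_conj]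

end Aux

theorem statement12 (n : ℕ) (hn : 1 ≤ n)
    (G2 Jset : Set (Matrix (Fin (2*n+2)) (Fin (2*n+2)) ℝ))
    (hG2 : G2 = {M | ∃ S w r, Sᵀ * zetaC n * S = zetaC n ∧
      (M = GamO n S w r ∨ M = GamO n S w r * Tmat n)})
    (hJ : Jset = {M | ∃ S w r, Sᵀ * zetaC n * S = zetaC n ∧ M = GamO n S w r}) :
    (Tmat n)ᵀ * zetaBig n * Tmat n = zetaBig n ∧
    (Tmat n)ᵀ * etaM n * Tmat n = etaM n ∧
    Tmat n * Tmat n = 1 ∧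
    (∀ (S : Matrix (Fin (2*n)) (Fin (2*n)) ℝ) (w : Fin (2*n) → ℝ) (r : ℝ),
      Sᵀ * zetaC n * S = zetaC n →
      Tmat n * GamO n S w r * (Tmat n)⁻¹ = GamO n S (-w) r) ∧
    (1 ∈ G2 ∧ (∀ A ∈ G2, ∀ B ∈ G2, A * B ∈ G2) ∧ (∀ A ∈ G2, A⁻¹ ∈ G2) ∧
      (∀ A ∈ G2, IsUnit A)) ∧
    (Jset ⊆ G2 ∧ (∀ g ∈ G2, ∀ h ∈ Jset, g * h * g⁻¹ ∈ Jset)) ∧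
    (∀ g ∈ G2, g ∈ Jset ∨ g * Tmat n ∈ Jset) ∧
    Tmat n ∈ G2 ∧ Tmat n ∉ Jset := by
  have hTinv : (Tmat n)⁻¹ = Tmat n := Matrix.inv_eq_right_inv (T_sq n)
  have hJmem : ∀ S w r, Sᵀ * zetaC n * S = zetaC n → GamO n S w r ∈ Jset := by
    intro S w r hS; rw [hJ]; exact ⟨S, w, r, hS, rfl⟩
  have hJmul : ∀ A ∈ Jset, ∀ B ∈ Jset, A * B ∈ Jset := by
    intro A hA B hB
    rw [hJ] at hA hB
    obtain ⟨S, w, r, hS, rfl⟩ := hA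
    obtain ⟨S', w', r', hS', rfl⟩ := hB
    rw [gam_mul hS]
    exact hJmem _ _ _ (symp_mul hS hS')
  have hTJT : ∀ A ∈ Jset, Tmat n * A * Tmat n ∈ Jset := by
    intro A hA; rw [hJ] at hA; obtain ⟨S, w, r, hS, rfl⟩ := hA
    rw [T_conj]; exact hJmem _ _ _ hS
  refine ⟨TZT n, TET n, T_sq n, ?_, ⟨?_, ?_, ?_, ?_⟩, ⟨?_, ?_⟩, ?_, ?_, ?_⟩
  · intro S w r hS
    rw [hTinv]; exact T_conj n S w r
  · rw [hG2]; exact ⟨1, 0, 0, symp_one, Or.inl (gam_one n).symm⟩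
  · intro A hA B hB
    rw [hG2] at hA hB ⊢
    obtain ⟨S, w, r, hS, rfl | rfl⟩ := hA <;> obtain ⟨S', w', r', hS', rfl | rfl⟩ := hB
    · exact ⟨S*S', _, _, symp_mul hS hS', Or.inl (gam_mul hS)⟩
    · exact ⟨S*S', _, _, symp_mul hS hS', Or.inr (by rw [← mul_assoc, gam_mul hS])⟩
    · have key : GamO n S w r * Tmat n * GamO n S' w' r'
          = (GamO n S w r * GamO n S' (-w') r') * Tmat n := by
        rw [mul_assoc, T_swap, ← mul_assoc]
      exact ⟨S*S', _, _, symp_mul hS hS', Or.inr (by rw [key, gam_mul hS])⟩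
    · have key : GamO n S w r * Tmat n * (GamO n S' w' r' * Tmat n)
          = GamO n S w r * GamO n S' (-w') r' := by
        rw [mul_assoc, ← mul_assoc (Tmat n) (GamO n S' w' r') (Tmat n), T_swap,
          mul_assoc (GamO n S' (-w') r') (Tmat n) (Tmat n), T_sq, mul_one]
      exact ⟨S*S', _, _, symp_mul hS hS', Or.inl (by rw [key, gam_mul hS])⟩
  · intro A hA
    rw [hG2] at hA ⊢
    obtain ⟨S, w, r, hS, rfl | rfl⟩ := hA <;>
      obtain ⟨S₁, w₁, r₁, hs1, hr1, hl1⟩ := gam_inv_ex (w := w) (r := r) hS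
    · exact ⟨S₁, w₁, r₁, hs1, Or.inl (Matrix.inv_eq_right_inv hr1)⟩
    · have hB : (GamO n S w r * Tmat n) * (Tmat n * GamO n S₁ w₁ r₁) = 1 := by
        rw [mul_assoc, ← mul_assoc (Tmat n) (Tmat n) (GamO n S₁ w₁ r₁), T_sq, one_mul, hr1]
      refine ⟨S₁, -w₁, r₁, hs1, Or.inr ?_⟩
      rw [Matrix.inv_eq_right_inv hB, T_swap]
  · intro A hA
    rw [hG2] at hA
    obtain ⟨S, w, r, hS, rfl | rfl⟩ := hA <;>
      obtain ⟨S₁, w₁, r₁, hs1, hr1, hl1⟩ := gam_inv_ex (w := w) (r := r) hS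
    · exact ⟨⟨GamO n S w r, GamO n S₁ w₁ r₁, hr1, hl1⟩, rfl⟩
    · have hB : (GamO n S w r * Tmat n) * (Tmat n * GamO n S₁ w₁ r₁) = 1 := by
        rw [mul_assoc, ← mul_assoc (Tmat n) (Tmat n) (GamO n S₁ w₁ r₁), T_sq, one_mul, hr1]
      have hB' : (Tmat n * GamO n S₁ w₁ r₁) * (GamO n S w r * Tmat n) = 1 := by
        rw [mul_assoc, ← mul_assoc (GamO n S₁ w₁ r₁) (GamO n S w r) (Tmat n), hl1,
          one_mul, T_sq]
      exact ⟨⟨GamO n S w r * Tmat n, Tmat n * GamO n S₁ w₁ r₁, hB, hB'⟩, rfl⟩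
  · intro M hM
    rw [hJ] at hM; rw [hG2]
    obtain ⟨S, w, r, hS, h⟩ := hM
    exact ⟨S, w, r, hS, Or.inl h⟩
  · intro g hg h hh
    rw [hG2] at hg
    obtain ⟨S, w, r, hS, rfl | rfl⟩ := hg <;>
      obtain ⟨S₁, w₁, r₁, hs1, hr1, hl1⟩ := gam_inv_ex (w := w) (r := r) hS
    · rw [Matrix.inv_eq_right_inv hr1]
      exact hJmul _ (hJmul _ (hJmem S w r hS) _ hh) _ (hJmem S₁ w₁ r₁ hs1)
    · have hB : (GamO n S w r * Tmat n) * (Tmat n * GamO n S₁ w₁ r₁) = 1 := by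
        rw [mul_assoc, ← mul_assoc (Tmat n) (Tmat n) (GamO n S₁ w₁ r₁), T_sq, one_mul, hr1]
      have key : GamO n S w r * Tmat n * h * (Tmat n * GamO n S₁ w₁ r₁)
          = GamO n S w r * (Tmat n * h * Tmat n) * GamO n S₁ w₁ r₁ := by
        simp only [mul_assoc]
      rw [Matrix.inv_eq_right_inv hB, key]
      exact hJmul _ (hJmul _ (hJmem S w r hS) _ (hTJT h hh)) _ (hJmem S₁ w₁ r₁ hs1)
  · intro g hg
    rw [hG2] at hg
    obtain ⟨S, w, r, hS, rfl | rfl⟩ := hg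
    · exact Or.inl (hJmem S w r hS)
    · right; rw [mul_assoc, T_sq, mul_one]; exact hJmem S w r hS
  · rw [hG2]
    exact ⟨1, 0, 0, symp_one, Or.inr (by rw [gam_one, one_mul])⟩
  · intro hT
    rw [hJ] at hT
    obtain ⟨S, w, r, hS, h⟩ := hT
    have h2 := congrFun (congrFun h (⟨2*n+1, by omega⟩ : Fin (2*n+2))) ⟨2*n+1, by omega⟩
    rw [gG (show ((⟨2*n+1, by omega⟩ : Fin (2*n+2))).val = 2*n+1 from rfl),
      if_pos (show (2*n+1 : ℕ) = 2*n+1 from rfl)] at h2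
    rw [Tmat, Matrix.diagonal_apply_eq, if_neg (show ¬ (2*n+1 < 2*n) by omega)] at h2
    norm_num at h2


end
end

section
/- Let n ≥ 1. Let H : ℝ^{2n} × ℝ → ℝ and φ : ℝ → ℝ^{2n} be differentiable, and suppose Hamilton's equations hold in the form φ'(t) = ζ°·∇_y H(y, t) for all y ∈ ℝ^{2n} and t ∈ ℝ (where ∇_y H denotes the gradient of H in its first 2n variables). Define ρ : ℝ^{2n} × ℝ × ℝ → ℝ^{2n} × ℝ × ℝ by ρ(y, ε, t) = (y + φ(t), ε + H(y, t), t). Then ρ is differentiable and, at every point z, the total derivative Dρ(z), written as a (2n+2)×(2n+2) matrix M in the coordinates (y, ε, t), satisfies MᵀζM = ζ and MᵀηM = η; that is, ρ preserves the symplectic 2-form determined by ζ and the degenerate time metric determined by η. -/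
open Matrix

noncomputable section

open Matrix

section AuxLemmas

lemma vecMulVec_mul' {m : ℕ} (u v : Fin m → ℝ) (B : Matrix (Fin m) (Fin m) ℝ) :
    vecMulVec u v * B = vecMulVec u (v ᵥ* B) := by
  ext i j
  simp only [mul_apply, vecMulVec_apply, vecMul, dotProduct]
  rw [Finset.mul_sum]
  exact Finset.sum_congr rfl fun k _ => by ring

lemma mul_vecMulVec' {m : ℕ} (B : Matrix (Fin m) (Fin m) ℝ) (u v : Fin m → ℝ) :
    B * vecMulVec u v = vecMulVec (B *ᵥ u) v := by
  ext i j
  simp only [mul_apply, vecMulVec_apply, mulVec, dotProduct]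
  rw [Finset.sum_mul]
  exact Finset.sum_congr rfl fun k _ => by ring

lemma vecMulVec_mul_vecMulVec {m : ℕ} (a b c d : Fin m → ℝ) :
    vecMulVec a b * vecMulVec c d = (b ⬝ᵥ c) • vecMulVec a d := by
  ext i j
  simp only [mul_apply, vecMulVec_apply, dotProduct, Matrix.smul_apply, smul_eq_mul]
  rw [Finset.sum_mul]
  exact Finset.sum_congr rfl fun k _ => by ring

lemma vecMulVec_transpose' {m : ℕ} (u v : Fin m → ℝ) :
    (vecMulVec u v)ᵀ = vecMulVec v u := by
  ext i j; simp [vecMulVec_apply, mul_comm]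

lemma vecMulVec_neg_left {m : ℕ} (u v : Fin m → ℝ) :
    vecMulVec (-u) v = -vecMulVec u v := by
  ext i j; simp [vecMulVec_apply]

lemma vecMulVec_add_left {m : ℕ} (u u' v : Fin m → ℝ) :
    vecMulVec (u + u') v = vecMulVec u v + vecMulVec u' v := by
  ext i j; simp [vecMulVec_apply, add_mul]

lemma vecMulVec_add_right {m : ℕ} (u v v' : Fin m → ℝ) :
    vecMulVec u (v + v') = vecMulVec u v + vecMulVec u v' := by
  ext i j; simp [vecMulVec_apply, mul_add]

lemma vecMulVec_smul_left {m : ℕ} (c : ℝ) (u v : Fin m → ℝ) :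
    vecMulVec (c • u) v = c • vecMulVec u v := by
  ext i j; simp [vecMulVec_apply, mul_assoc]

lemma vecMulVec_smul_right {m : ℕ} (c : ℝ) (u v : Fin m → ℝ) :
    vecMulVec u (c • v) = c • vecMulVec u v := by
  ext i j; simp [vecMulVec_apply]; ring

lemma zetaBig_transpose (n : ℕ) : (zetaBig n)ᵀ = -(zetaBig n) := by
  ext i j
  simp only [transpose_apply, zetaBig, of_apply, Matrix.neg_apply]
  split_ifs <;> first | (exfalso; omega) | norm_num

lemma zetaBig_mulVec (n : ℕ) (x : Fin (2*n+2) → ℝ) (j : Fin (2*n+2)) :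
    (zetaBig n *ᵥ x) j =
      if h : j.val % 2 = 0 then x ⟨j.val+1, by omega⟩ else -x ⟨j.val-1, by omega⟩ := by
  have hj := j.isLt
  by_cases h : j.val % 2 = 0
  · rw [dif_pos h]
    show ∑ k, zetaBig n j k * x k = _
    rw [Finset.sum_eq_single (⟨j.val+1, by omega⟩ : Fin (2*n+2))]
    · have hv : ∀ k : Fin (2*n+2), k.val = j.val + 1 → zetaBig n j k = 1 := by
        intro k hk
        simp only [zetaBig, of_apply]
        split_ifs <;> first | rfl | (exfalso; omega)
      rw [hv _ rfl, one_mul]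
    · intro b _ hb
      have hb' : b.val ≠ j.val + 1 := fun hh => hb (Fin.ext hh)
      have hv : zetaBig n j b = 0 := by
        simp only [zetaBig, of_apply]
        split_ifs <;> first | rfl | (exfalso; omega)
      rw [hv, zero_mul]
    · intro hmem; exact absurd (Finset.mem_univ _) hmem
  · rw [dif_neg h]
    show ∑ k, zetaBig n j k * x k = _
    rw [Finset.sum_eq_single (⟨j.val-1, by omega⟩ : Fin (2*n+2))]
    · have hv : ∀ k : Fin (2*n+2), k.val = j.val - 1 → zetaBig n j k = -1 := by
        intro k hk
        simp only [zetaBig, of_apply]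
        split_ifs <;> first | rfl | (exfalso; omega)
      rw [hv _ rfl]; ring
    · intro b _ hb
      have hb' : b.val ≠ j.val - 1 := fun hh => hb (Fin.ext hh)
      have hv : zetaBig n j b = 0 := by
        simp only [zetaBig, of_apply]
        split_ifs <;> first | rfl | (exfalso; omega)
      rw [hv, zero_mul]
    · intro hmem; exact absurd (Finset.mem_univ _) hmem

lemma zetaC_sum (n : ℕ) (a : Fin (2*n)) (x : Fin (2*n) → ℝ) :
    ∑ b, zetaC n a b * x b =
      if h : a.val % 2 = 0 then x ⟨a.val+1, by omega⟩ else -x ⟨a.val-1, by omega⟩ := by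
  have ha := a.isLt
  by_cases h : a.val % 2 = 0
  · rw [dif_pos h]
    rw [Finset.sum_eq_single (⟨a.val+1, by omega⟩ : Fin (2*n))]
    · have hv : ∀ k : Fin (2*n), k.val = a.val + 1 → zetaC n a k = 1 := by
        intro k hk
        simp only [zetaC, of_apply]
        split_ifs <;> first | rfl | (exfalso; omega)
      rw [hv _ rfl, one_mul]
    · intro b _ hb
      have hb' : b.val ≠ a.val + 1 := fun hh => hb (Fin.ext hh)
      have hv : zetaC n a b = 0 := by
        simp only [zetaC, of_apply]
        split_ifs <;> first | rfl | (exfalso; omega)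
      rw [hv, zero_mul]
    · intro hmem; exact absurd (Finset.mem_univ _) hmem
  · rw [dif_neg h]
    rw [Finset.sum_eq_single (⟨a.val-1, by omega⟩ : Fin (2*n))]
    · have hv : ∀ k : Fin (2*n), k.val = a.val - 1 → zetaC n a k = -1 := by
        intro k hk
        simp only [zetaC, of_apply]
        split_ifs <;> first | rfl | (exfalso; omega)
      rw [hv _ rfl]; ring
    · intro b _ hb
      have hb' : b.val ≠ a.val - 1 := fun hh => hb (Fin.ext hh)
      have hv : zetaC n a b = 0 := by
        simp only [zetaC, of_apply]
        split_ifs <;> first | rfl | (exfalso; omega)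
      rw [hv, zero_mul]
    · intro hmem; exact absurd (Finset.mem_univ _) hmem

lemma etaM_eq (n : ℕ) :
    etaM n = vecMulVec (Pi.single (⟨2*n+1, by omega⟩ : Fin (2*n+2)) (1:ℝ))
      (Pi.single ⟨2*n+1, by omega⟩ 1) := by
  ext i j
  have hi := i.isLt; have hj := j.isLt
  simp only [etaM, of_apply, vecMulVec_apply, Pi.single_apply, Fin.ext_iff]
  split_ifs <;> first | (exfalso; omega) | norm_num

lemma zeta_mulVec_e (n : ℕ) :
    zetaBig n *ᵥ Pi.single (⟨2*n, by omega⟩ : Fin (2*n+2)) (1:ℝ) =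
      -Pi.single ⟨2*n+1, by omega⟩ 1 := by
  funext j
  rw [mulVec_single]
  simp only [Pi.smul_apply, col_apply, MulOpposite.op_one, one_smul, mul_one, Pi.neg_apply, Pi.single_apply, zetaBig, of_apply, Fin.ext_iff]
  have hj := j.isLt
  split_ifs <;> first | (exfalso; omega) | norm_num

lemma e_vecMul_zeta (n : ℕ) :
    Pi.single (⟨2*n, by omega⟩ : Fin (2*n+2)) (1:ℝ) ᵥ* zetaBig n =
      Pi.single ⟨2*n+1, by omega⟩ 1 := by
  funext j
  rw [single_vecMul]
  simp only [Pi.smul_apply, row_apply, smul_eq_mul, one_mul, Pi.single_apply, zetaBig, of_apply, Fin.ext_iff]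
  have hj := j.isLt
  split_ifs <;> first | (exfalso; omega) | norm_num

lemma dot_mulVec_skew {m : ℕ} (A : Matrix (Fin m) (Fin m) ℝ) (hA : Aᵀ = -A)
    (x : Fin m → ℝ) : x ⬝ᵥ (A *ᵥ x) = 0 := by
  have h2 : x ᵥ* A = -(A *ᵥ x) := by
    rw [← mulVec_transpose, hA, neg_mulVec]
  have h1 : x ⬝ᵥ (A *ᵥ x) = -(x ⬝ᵥ (A *ᵥ x)) := by
    calc x ⬝ᵥ (A *ᵥ x) = (x ᵥ* A) ⬝ᵥ x := dotProduct_mulVec x A x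
    _ = -((A *ᵥ x) ⬝ᵥ x) := by rw [h2, neg_dotProduct]
    _ = -(x ⬝ᵥ (A *ᵥ x)) := by rw [dotProduct_comm]
  linarith

end AuxLemmas

lemma vecMulVec_neg_right {m : ℕ} (u v : Fin m → ℝ) :
    vecMulVec u (-v) = -vecMulVec u v := by
  ext i j; simp [vecMulVec_apply]

lemma key_alg (n : ℕ) (U V : Fin (2*n+2) → ℝ)
    (M : Matrix (Fin (2*n+2)) (Fin (2*n+2)) ℝ)
    (hM : M = 1 + (vecMulVec U (Pi.single (⟨2*n+1, by omega⟩ : Fin (2*n+2)) 1) +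
        vecMulVec (Pi.single (⟨2*n, by omega⟩ : Fin (2*n+2)) 1) V))
    (hU : U ⟨2*n+1, by omega⟩ = 0)
    (hV : ∀ k : Fin (2*n+2), 2*n ≤ k.val → V k = 0)
    (hWV : zetaBig n *ᵥ U + V =
      (-(U ⟨2*n, by omega⟩)) •
        (Pi.single (⟨2*n+1, by omega⟩ : Fin (2*n+2)) (1:ℝ) : Fin (2*n+2) → ℝ)) :
    Mᵀ * zetaBig n * M = zetaBig n ∧ Mᵀ * etaM n * M = etaM n := by
  have hne : ((⟨2*n, by omega⟩ : Fin (2*n+2))) ≠ ⟨2*n+1, by omega⟩ := by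
    intro hh
    have := congrArg Fin.val hh
    simp only [] at this
    omega
  set e : Fin (2*n+2) → ℝ := Pi.single ⟨2*n, by omega⟩ 1 with he
  set e' : Fin (2*n+2) → ℝ := Pi.single ⟨2*n+1, by omega⟩ 1 with he'
  set N : Matrix (Fin (2*n+2)) (Fin (2*n+2)) ℝ := vecMulVec U e' + vecMulVec e V with hN
  set W : Fin (2*n+2) → ℝ := zetaBig n *ᵥ U with hW
  -- dot product facts
  have hUe' : U ⬝ᵥ e' = 0 := by
    rw [he', dotProduct_single, hU, zero_mul]
  have he'U : e' ⬝ᵥ U = 0 := by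
    rw [he', single_dotProduct, hU, mul_zero]
  have hee' : e ⬝ᵥ e' = 0 := by
    rw [he, he', single_dotProduct, Pi.single_apply, if_neg hne, mul_zero]
  have he'e : e' ⬝ᵥ e = 0 := by
    rw [he, he', single_dotProduct, Pi.single_apply, if_neg (Ne.symm hne), mul_zero]
  have hW2n : W ⟨2*n, by omega⟩ = 0 := by
    rw [hW, zetaBig_mulVec, dif_pos (show (2*n) % 2 = 0 by omega)]
    exact hU
  have heW : e ⬝ᵥ W = 0 := by
    rw [he, single_dotProduct, hW2n, mul_zero]
  have hUW : U ⬝ᵥ W = 0 := by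
    rw [hW]; exact dot_mulVec_skew _ (zetaBig_transpose n) U
  have hUζ : U ᵥ* zetaBig n = -W := by
    rw [hW, ← mulVec_transpose, zetaBig_transpose, neg_mulVec]
  have hze : zetaBig n *ᵥ e = -e' := by rw [he, he']; exact zeta_mulVec_e n
  have hez : e ᵥ* zetaBig n = e' := by rw [he, he']; exact e_vecMul_zeta n
  -- matrix pieces
  have hζN : zetaBig n * N = vecMulVec W e' - vecMulVec e' V := by
    rw [hN, Matrix.mul_add, mul_vecMulVec', mul_vecMulVec', hze, ← hW,
      vecMulVec_neg_left, sub_eq_add_neg]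
  have hNT : Nᵀ = vecMulVec e' U + vecMulVec V e := by
    rw [hN, transpose_add, vecMulVec_transpose', vecMulVec_transpose']
  have hNζ : Nᵀ * zetaBig n = -vecMulVec e' W + vecMulVec V e' := by
    rw [hNT, Matrix.add_mul, vecMulVec_mul', vecMulVec_mul', hUζ, hez,
      vecMulVec_neg_right]
  have hcancel : zetaBig n * N + Nᵀ * zetaBig n = 0 := by
    rw [hζN, hNζ]
    have h1 : vecMulVec (W + V) e' = vecMulVec e' (W + V) := by
      rw [hWV, vecMulVec_smul_left, vecMulVec_smul_right]
    have h2 : vecMulVec W e' + vecMulVec V e' = vecMulVec e' W + vecMulVec e' V := by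
      rw [← vecMulVec_add_left, ← vecMulVec_add_right, h1]
    have h3 : vecMulVec W e' - vecMulVec e' V + (-vecMulVec e' W + vecMulVec V e') =
        (vecMulVec W e' + vecMulVec V e') - (vecMulVec e' W + vecMulVec e' V) := by
      abel
    rw [h3, h2, sub_self]
  have hNζN : Nᵀ * (zetaBig n * N) = 0 := by
    rw [hNT, hζN, Matrix.add_mul, Matrix.mul_sub, Matrix.mul_sub,
      vecMulVec_mul_vecMulVec, vecMulVec_mul_vecMulVec, vecMulVec_mul_vecMulVec,
      vecMulVec_mul_vecMulVec, hUW, hUe', heW, hee', zero_smul, zero_smul, zero_smul,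
      zero_smul]
    simp
  constructor
  · have expand : (1+N)ᵀ * zetaBig n * (1+N) =
        zetaBig n + (zetaBig n * N + Nᵀ * zetaBig n) + Nᵀ * (zetaBig n * N) := by
      rw [transpose_add, transpose_one]
      noncomm_ring
    rw [hM, expand, hcancel, hNζN, add_zero, add_zero]
  · have hEta : etaM n = vecMulVec e' e' := by rw [he']; exact etaM_eq n
    have hηN : etaM n * N = 0 := by
      rw [hEta, hN, Matrix.mul_add, vecMulVec_mul_vecMulVec, vecMulVec_mul_vecMulVec,
        he'U, he'e, zero_smul, zero_smul, add_zero]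
    have hNη : Nᵀ * etaM n = 0 := by
      rw [hNT, hEta, Matrix.add_mul, vecMulVec_mul_vecMulVec, vecMulVec_mul_vecMulVec,
        hUe', hee', zero_smul, zero_smul, add_zero]
    have expand : (1+N)ᵀ * etaM n * (1+N) =
        etaM n + (etaM n * N + Nᵀ * etaM n) + Nᵀ * (etaM n * N) := by
      rw [transpose_add, transpose_one]
      noncomm_ring
    rw [hM, expand, hηN, hNη, Matrix.mul_zero, add_zero, add_zero, add_zero]

theorem statement17 (n : ℕ) (hn : 1 ≤ n)
    (H : (Fin (2*n) → ℝ) → ℝ → ℝ) (φ : ℝ → Fin (2*n) → ℝ)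
    (hH : Differentiable ℝ (fun p : (Fin (2*n) → ℝ) × ℝ => H p.1 p.2))
    (hφ : Differentiable ℝ φ)
    (ham : ∀ (y : Fin (2*n) → ℝ) (t : ℝ) (a : Fin (2*n)),
      deriv (fun s => φ s a) t =
        ∑ b, zetaC n a b * fderiv ℝ (fun y' => H y' t) y (Pi.single b 1)) :
    Differentiable ℝ (rhoMap n φ H 0) ∧
    ∀ z : Fin (2*n+2) → ℝ,
      (jacM (2*n+2) (rhoMap n φ H 0) z)ᵀ * zetaBig n * jacM (2*n+2) (rhoMap n φ H 0) z =
        zetaBig n ∧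
      (jacM (2*n+2) (rhoMap n φ H 0) z)ᵀ * etaM n * jacM (2*n+2) (rhoMap n φ H 0) z =
        etaM n := by
  classical
  have hco : ∀ (z : Fin (2*n+2) → ℝ) (i : Fin (2*n+2)),
      HasFDerivAt (fun w => rhoMap n φ H 0 w i)
        (if hi : i.val < 2*n then
           (ContinuousLinearMap.proj i : (Fin (2*n+2) → ℝ) →L[ℝ] ℝ) +
             (deriv (fun s => φ s ⟨i.val, hi⟩) (z ⟨2*n+1, by omega⟩)) •
               (ContinuousLinearMap.proj (⟨2*n+1, by omega⟩ : Fin (2*n+2)) :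
                 (Fin (2*n+2) → ℝ) →L[ℝ] ℝ)
         else if i.val = 2*n then
           (ContinuousLinearMap.proj i : (Fin (2*n+2) → ℝ) →L[ℝ] ℝ) +
             (fderiv ℝ (fun p : (Fin (2*n) → ℝ) × ℝ => H p.1 p.2)
               (yPart n z, z ⟨2*n+1, by omega⟩)).comp
               ((ContinuousLinearMap.pi fun a : Fin (2*n) =>
                   ContinuousLinearMap.proj (⟨a.val, by omega⟩ : Fin (2*n+2))).prod
                 (ContinuousLinearMap.proj ⟨2*n+1, by omega⟩))
         else ContinuousLinearMap.proj i : (Fin (2*n+2) → ℝ) →L[ℝ] ℝ) z := by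
    intro z i
    by_cases hi : i.val < 2*n
    · rw [dif_pos hi]
      have heq : (fun w => rhoMap n φ H 0 w i) =
          (fun w : Fin (2*n+2) → ℝ => w i + φ (w ⟨2*n+1, by omega⟩) ⟨i.val, hi⟩) := by
        funext w; simp only [rhoMap, tCoord, dif_pos hi]
      rw [heq]
      have hd : HasDerivAt (fun s => φ s ⟨i.val, hi⟩)
          (deriv (fun s => φ s ⟨i.val, hi⟩) (z ⟨2*n+1, by omega⟩)) (z ⟨2*n+1, by omega⟩) :=
        ((differentiable_pi.mp hφ ⟨i.val, hi⟩) (z ⟨2*n+1, by omega⟩)).hasDerivAt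
      exact (ContinuousLinearMap.proj i).hasFDerivAt.add
        (hd.comp_hasFDerivAt z
          (ContinuousLinearMap.proj (R := ℝ) (φ := fun _ : Fin (2*n+2) => ℝ)
            ⟨2*n+1, by omega⟩).hasFDerivAt)
    · by_cases hieq : i.val = 2*n
      · rw [dif_neg hi, if_pos hieq]
        have heq : (fun w => rhoMap n φ H 0 w i) =
            (fun w : Fin (2*n+2) → ℝ => w i + H (yPart n w) (tCoord n w)) := by
          funext w; simp only [rhoMap, dif_neg hi, if_pos hieq]
        rw [heq]
        set Q : (Fin (2*n+2) → ℝ) →L[ℝ] (Fin (2*n) → ℝ) × ℝ :=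
          (ContinuousLinearMap.pi fun a : Fin (2*n) =>
              ContinuousLinearMap.proj (⟨a.val, by omega⟩ : Fin (2*n+2))).prod
            (ContinuousLinearMap.proj ⟨2*n+1, by omega⟩) with hQ
        have hq : HasFDerivAt
            (fun w : Fin (2*n+2) → ℝ => ((yPart n w, tCoord n w) : (Fin (2*n) → ℝ) × ℝ))
            Q z := Q.hasFDerivAt
        exact (ContinuousLinearMap.proj i).hasFDerivAt.add
          (((hH (yPart n z, tCoord n z)).hasFDerivAt).comp z hq)
      · rw [dif_neg hi, if_neg hieq]
        have heq : (fun w => rhoMap n φ H 0 w i) =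
            (fun w : Fin (2*n+2) → ℝ => w i + 0) := by
          funext w; simp only [rhoMap, dif_neg hi, if_neg hieq]
        rw [heq]
        exact (ContinuousLinearMap.proj (R := ℝ) (φ := fun _ : Fin (2*n+2) => ℝ)
          i).hasFDerivAt.add_const (0:ℝ)
  have hdiff : Differentiable ℝ (rhoMap n φ H 0) :=
    differentiable_pi.mpr fun i z => (hco z i).differentiableAt
  refine ⟨hdiff, fun z => ?_⟩
  set U : Fin (2*n+2) → ℝ := fun k =>
    if hk : k.val < 2*n then deriv (fun s => φ s ⟨k.val, hk⟩) (z ⟨2*n+1, by omega⟩)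
    else if k.val = 2*n then
      fderiv ℝ (fun p : (Fin (2*n) → ℝ) × ℝ => H p.1 p.2)
        (yPart n z, z ⟨2*n+1, by omega⟩) (0, 1)
    else 0 with hUdef
  set V : Fin (2*n+2) → ℝ := fun k =>
    if hk : k.val < 2*n then
      fderiv ℝ (fun y' => H y' (z ⟨2*n+1, by omega⟩)) (yPart n z) (Pi.single ⟨k.val, hk⟩ 1)
    else 0 with hVdef
  have hUlt : ∀ (k : Fin (2*n+2)) (hk : k.val < 2*n),
      U k = deriv (fun s => φ s ⟨k.val, hk⟩) (z ⟨2*n+1, by omega⟩) := by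
    intro k hk; rw [hUdef]; exact dif_pos hk
  have hU2n : ∀ (k : Fin (2*n+2)), k.val = 2*n →
      U k = fderiv ℝ (fun p : (Fin (2*n) → ℝ) × ℝ => H p.1 p.2)
        (yPart n z, z ⟨2*n+1, by omega⟩) (0, 1) := by
    intro k hk; rw [hUdef]
    simp only []
    rw [dif_neg (by omega), if_pos hk]
  have hUtop : ∀ (k : Fin (2*n+2)), 2*n+1 ≤ k.val → U k = 0 := by
    intro k hk; rw [hUdef]
    simp only []
    rw [dif_neg (by omega), if_neg (by omega)]
  have hVlt : ∀ (k : Fin (2*n+2)) (hk : k.val < 2*n),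
      V k = fderiv ℝ (fun y' => H y' (z ⟨2*n+1, by omega⟩)) (yPart n z)
        (Pi.single ⟨k.val, hk⟩ 1) := by
    intro k hk; rw [hVdef]; exact dif_pos hk
  have hVge : ∀ (k : Fin (2*n+2)), 2*n ≤ k.val → V k = 0 := by
    intro k hk; rw [hVdef]
    simp only []
    rw [dif_neg (by omega)]
  -- the partial derivative in y
  have hpart : fderiv ℝ (fun y' => H y' (z ⟨2*n+1, by omega⟩)) (yPart n z) =
      (fderiv ℝ (fun p : (Fin (2*n) → ℝ) × ℝ => H p.1 p.2)
        (yPart n z, z ⟨2*n+1, by omega⟩)).comp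
        (ContinuousLinearMap.inl ℝ (Fin (2*n) → ℝ) ℝ) := by
    have h1 : HasFDerivAt (fun y' => H y' (z ⟨2*n+1, by omega⟩))
        ((fderiv ℝ (fun p : (Fin (2*n) → ℝ) × ℝ => H p.1 p.2)
          (yPart n z, z ⟨2*n+1, by omega⟩)).comp
          (ContinuousLinearMap.inl ℝ (Fin (2*n) → ℝ) ℝ)) (yPart n z) :=
      by
        have hg := hasFDerivAt_prodMk_left (𝕜 := ℝ) (yPart n z) (z ⟨2*n+1, by omega⟩)
        have hf := (hH (yPart n z, z ⟨2*n+1, by omega⟩)).hasFDerivAt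
        exact hf.comp (yPart n z) hg
    exact h1.fderiv
  -- jacobian computation
  have hjac : jacM (2*n+2) (rhoMap n φ H 0) z =
      1 + (vecMulVec U (Pi.single (⟨2*n+1, by omega⟩ : Fin (2*n+2)) 1) +
        vecMulVec (Pi.single (⟨2*n, by omega⟩ : Fin (2*n+2)) 1) V) := by
    have hfd : fderiv ℝ (rhoMap n φ H 0) z =
        ContinuousLinearMap.pi (fun i => fderiv ℝ (fun w => rhoMap n φ H 0 w i) z) :=
      fderiv_pi (fun i => (hco z i).differentiableAt)
    ext i j
    simp only [jacM, of_apply]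
    rw [hfd, ContinuousLinearMap.pi_apply, (hco z i).fderiv]
    simp only [Matrix.add_apply, Matrix.one_apply, vecMulVec_apply, Pi.single_apply]
    by_cases hi : i.val < 2*n
    · rw [dif_pos hi]
      simp only [ContinuousLinearMap.add_apply, ContinuousLinearMap.smul_apply,
        ContinuousLinearMap.proj_apply, Pi.single_apply, smul_eq_mul]
      have hi2n : (if i = (⟨2*n, by omega⟩ : Fin (2*n+2)) then (1:ℝ) else 0) = 0 := by
        rw [if_neg]; intro hh; have := congrArg Fin.val hh; simp at this; omega
      rw [hi2n, zero_mul, add_zero, hUlt i hi]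
      by_cases hj : j = (⟨2*n+1, by omega⟩ : Fin (2*n+2))
      · rw [if_pos hj.symm, if_pos hj]
      · rw [if_neg (show ((⟨2*n+1, by omega⟩ : Fin (2*n+2)) = j) → False from
          fun hh => hj hh.symm), if_neg hj]
    · by_cases hieq : i.val = 2*n
      · rw [dif_neg hi, if_pos hieq]
        simp only [ContinuousLinearMap.add_apply, ContinuousLinearMap.comp_apply,
          ContinuousLinearMap.prod_apply, ContinuousLinearMap.pi_apply,
          ContinuousLinearMap.proj_apply, Pi.single_apply]
        have hi2n : (if i = (⟨2*n, by omega⟩ : Fin (2*n+2)) then (1:ℝ) else 0) = 1 := by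
          rw [if_pos (Fin.ext hieq)]
        rw [hi2n, one_mul]
        by_cases hjlt : j.val < 2*n
        · have hP : (ContinuousLinearMap.pi fun a : Fin (2*n) =>
              ContinuousLinearMap.proj (R := ℝ) (φ := fun _ : Fin (2*n+2) => ℝ)
                ⟨a.val, by omega⟩)
                (Pi.single j (1:ℝ)) = Pi.single (⟨j.val, hjlt⟩ : Fin (2*n)) 1 := by
            funext a
            simp only [ContinuousLinearMap.pi_apply, ContinuousLinearMap.proj_apply]
            rw [Pi.single_apply, Pi.single_apply]
            by_cases ha : a.val = j.val
            · rw [if_pos (show (⟨a.val, by omega⟩ : Fin (2*n+2)) = j from Fin.ext ha),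
                if_pos (show a = (⟨j.val, hjlt⟩ : Fin (2*n)) from Fin.ext ha)]
            · rw [if_neg (show ¬((⟨a.val, by omega⟩ : Fin (2*n+2)) = j) from
                  fun hh => ha (by simpa using congrArg Fin.val hh)),
                if_neg (show ¬(a = (⟨j.val, hjlt⟩ : Fin (2*n))) from
                  fun hh => ha (by simpa using congrArg Fin.val hh))]
          have hjne : ¬((⟨2*n+1, by omega⟩ : Fin (2*n+2)) = j) := by
            intro hh; have := congrArg Fin.val hh; simp at this; omega
          have hjne2 : ¬(j = (⟨2*n+1, by omega⟩ : Fin (2*n+2))) := fun hh => hjne hh.symm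
          have hine : ¬(i = j) := by
            intro hh; have := congrArg Fin.val hh; omega
          rw [hP, if_neg hjne, if_neg hine, if_neg hjne2, hVlt j hjlt, hpart]
          simp only [ContinuousLinearMap.comp_apply, ContinuousLinearMap.inl_apply]
          ring
        · by_cases hj2n : j.val = 2*n
          · have hP : (ContinuousLinearMap.pi fun a : Fin (2*n) =>
                ContinuousLinearMap.proj (R := ℝ) (φ := fun _ : Fin (2*n+2) => ℝ)
                  ⟨a.val, by omega⟩)
                  (Pi.single j (1:ℝ)) = 0 := by
              funext a
              simp only [ContinuousLinearMap.pi_apply, ContinuousLinearMap.proj_apply,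
                Pi.zero_apply]
              rw [Pi.single_apply, if_neg (show ¬((⟨a.val, by omega⟩ : Fin (2*n+2)) = j) from
                fun hh => by have := congrArg Fin.val hh; simp at this; omega)]
            have hjne : ¬((⟨2*n+1, by omega⟩ : Fin (2*n+2)) = j) := by
              intro hh; have := congrArg Fin.val hh; simp at this; omega
            have hij : i = j := Fin.ext (show i.val = j.val by omega)
            rw [hP, if_neg hjne, if_pos hij, hVge j (by omega),
              if_neg (show (j = (⟨2*n+1, by omega⟩ : Fin (2*n+2))) → False from
                fun hh => hjne hh.symm)]
            have : ((0 : Fin (2*n) → ℝ), (0:ℝ)) = (0 : (Fin (2*n) → ℝ) × ℝ) := rfl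
            rw [this, map_zero]
            ring
          · -- j.val = 2n+1
            have hjval : j.val = 2*n+1 := by have := j.isLt; omega
            have hP : (ContinuousLinearMap.pi fun a : Fin (2*n) =>
                ContinuousLinearMap.proj (R := ℝ) (φ := fun _ : Fin (2*n+2) => ℝ)
                  ⟨a.val, by omega⟩)
                  (Pi.single j (1:ℝ)) = 0 := by
              funext a
              simp only [ContinuousLinearMap.pi_apply, ContinuousLinearMap.proj_apply,
                Pi.zero_apply]
              rw [Pi.single_apply, if_neg (show ¬((⟨a.val, by omega⟩ : Fin (2*n+2)) = j) from
                fun hh => by have := congrArg Fin.val hh; simp at this; omega)]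
            have hjeq : (⟨2*n+1, by omega⟩ : Fin (2*n+2)) = j :=
              Fin.ext (show 2*n+1 = j.val by omega)
            have hine : ¬(i = j) := by intro hh; have := congrArg Fin.val hh; omega
            rw [hP, if_pos hjeq, if_neg hine, if_pos hjeq.symm, hU2n i hieq,
              hVge j (by omega)]
            have : ((0 : Fin (2*n) → ℝ), (1:ℝ)) =
                ((0, 1) : (Fin (2*n) → ℝ) × ℝ) := rfl
            rw [this]
            ring
      · -- i.val = 2n+1
        rw [dif_neg hi, if_neg hieq]
        simp only [ContinuousLinearMap.proj_apply, Pi.single_apply]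
        have hival : i.val = 2*n+1 := by have := i.isLt; omega
        have hi2n : (if i = (⟨2*n, by omega⟩ : Fin (2*n+2)) then (1:ℝ) else 0) = 0 := by
          rw [if_neg]; intro hh; have := congrArg Fin.val hh; simp at this; omega
        rw [hi2n, hUtop i (by omega)]
        ring
  -- hypotheses of the algebraic lemma
  have hU0 : U ⟨2*n+1, by omega⟩ = 0 := hUtop _ (by simp)
  have hWV : zetaBig n *ᵥ U + V =
      (-(U ⟨2*n, by omega⟩)) •
        (Pi.single (⟨2*n+1, by omega⟩ : Fin (2*n+2)) (1:ℝ) : Fin (2*n+2) → ℝ) := by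
    funext j
    have hjlt2 := j.isLt
    simp only [Pi.add_apply, Pi.smul_apply, smul_eq_mul, Pi.single_apply]
    rw [zetaBig_mulVec]
    by_cases hpar : j.val % 2 = 0
    · rw [dif_pos hpar]
      by_cases hjlt : j.val < 2*n
      · have hj1 : j.val + 1 < 2*n := by omega
        have hjj : (if j = (⟨2*n+1, by omega⟩ : Fin (2*n+2)) then (1:ℝ) else 0) = 0 := by
          rw [if_neg]; intro hh; have := congrArg Fin.val hh; simp at this; omega
        rw [hjj, mul_zero, hUlt _ (show ((⟨j.val+1, by omega⟩ : Fin (2*n+2))).val < 2*n from hj1)]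
        rw [ham (yPart n z) (z ⟨2*n+1, by omega⟩) ⟨j.val+1, by omega⟩]
        rw [zetaC_sum]
        rw [dif_neg (show ¬((j.val+1) % 2 = 0) by omega)]
        rw [hVlt j hjlt]
        have hmk : (⟨(⟨j.val+1, hj1⟩ : Fin (2*n)).val - 1,
            show j.val + 1 - 1 < 2*n by omega⟩ : Fin (2*n)) =
            ⟨j.val, hjlt⟩ := Fin.ext (show j.val + 1 - 1 = j.val by omega)
        rw [hmk]
        ring
      · have hj2n : j.val = 2*n := by omega
        have hjj : (if j = (⟨2*n+1, by omega⟩ : Fin (2*n+2)) then (1:ℝ) else 0) = 0 := by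
          rw [if_neg]; intro hh; have := congrArg Fin.val hh; simp at this; omega
        rw [hjj, mul_zero, hUtop _ (show 2*n+1 ≤ ((⟨j.val+1, by omega⟩ : Fin (2*n+2))).val by
          simp; omega), hVge j (by omega)]
        ring
    · rw [dif_neg hpar]
      by_cases hjlt : j.val < 2*n
      · have hj1 : j.val - 1 < 2*n := by omega
        have hjj : (if j = (⟨2*n+1, by omega⟩ : Fin (2*n+2)) then (1:ℝ) else 0) = 0 := by
          rw [if_neg]; intro hh; have := congrArg Fin.val hh; simp at this; omega
        rw [hjj, mul_zero, hUlt _ (show ((⟨j.val-1, by omega⟩ : Fin (2*n+2))).val < 2*n from hj1)]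
        rw [ham (yPart n z) (z ⟨2*n+1, by omega⟩) ⟨j.val-1, by omega⟩]
        rw [zetaC_sum]
        rw [dif_pos (show ((j.val-1) % 2 = 0) by omega)]
        rw [hVlt j hjlt]
        have hmk : (⟨(⟨j.val-1, hj1⟩ : Fin (2*n)).val + 1,
            show j.val - 1 + 1 < 2*n by omega⟩ : Fin (2*n)) =
            ⟨j.val, hjlt⟩ := Fin.ext (show j.val - 1 + 1 = j.val by omega)
        rw [hmk]
        ring
      · have hjval : j.val = 2*n+1 := by omega
        have hjj : (if j = (⟨2*n+1, by omega⟩ : Fin (2*n+2)) then (1:ℝ) else 0) = 1 := by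
          rw [if_pos (Fin.ext (show j.val = 2*n+1 by omega))]
        have hmk : (⟨j.val - 1, by omega⟩ : Fin (2*n+2)) = ⟨2*n, by omega⟩ :=
          Fin.ext (show j.val - 1 = 2*n by omega)
        rw [hjj, mul_one, hmk, hVge j (by omega)]
        ring
  have := key_alg n U V (jacM (2*n+2) (rhoMap n φ H 0) z) hjac hU0 hVge hWV
  exact this

end
end

section
/- Let n ≥ 1 and let ρ : ℝ^{2n} × ℝ × ℝ → ℝ^{2n} × ℝ × ℝ be a continuously differentiable map such that at every point z = (y, ε, t) its Jacobian matrix in the coordinates (y, ε, t) equals Υ(w, r) for some w ∈ ℝ^{2n} and r ∈ ℝ (depending on z). Then there exist a constant c ∈ ℝ, a differentiable curve φ : ℝ → ℝ^{2n} and a differentiable function H : ℝ^{2n} × ℝ → ℝ such that ρ(y, ε, t) = (y + φ(t), ε + H(y, t), t + c) for all (y, ε, t), and Hamilton's equations φ'(t) = ζ°·∇_y H(y, t) hold for all y ∈ ℝ^{2n} and t ∈ ℝ (where ∇_y H denotes the gradient of H in its first 2n variables). -/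
open Matrix

noncomputable section

lemma const_of_partials {N : ℕ} (g : (Fin N → ℝ) → ℝ) (hg : Differentiable ℝ g)
    (s : Set (Fin N)) (h : ∀ z, ∀ j ∈ s, fderiv ℝ g z (Pi.single j 1) = 0)
    (z₁ z₂ : Fin N → ℝ) (hz : ∀ i, i ∉ s → z₁ i = z₂ i) : g z₁ = g z₂ := by
  set d := z₂ - z₁ with hd
  have key : ∀ t : ℝ, HasDerivAt (fun t : ℝ => g (z₁ + t • d)) 0 t := by
    intro t
    have h1 : HasDerivAt (fun t : ℝ => z₁ + t • d) d t := by
      simpa using ((hasDerivAt_id t).smul_const d).const_add z₁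
    have h2 := (hg (z₁ + t • d)).hasFDerivAt.comp_hasDerivAt t h1
    refine HasDerivAt.congr_deriv h2 (Eq.symm ?_)
    have hdd : d = ∑ j, d j • (Pi.single j 1 : Fin N → ℝ) := by
      ext i
      simp [Finset.sum_apply, Pi.single_apply]
    have hrw := congrArg (fderiv ℝ g (z₁ + t • d)) hdd
    rw [hrw, _root_.map_sum]
    symm
    refine Finset.sum_eq_zero fun j _ => ?_
    rw [(fderiv ℝ g (z₁ + t • d)).map_smul]
    by_cases hj : j ∈ s
    · rw [h _ j hj]; simp
    · have : d j = 0 := by simp [hd, hz j hj]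
      rw [this]; simp
  have hc := is_const_of_deriv_eq_zero (f := fun t : ℝ => g (z₁ + t • d))
    (fun t => (key t).differentiableAt) (fun t => (key t).deriv) 0 1
  simpa [hd] using hc

-- auxiliary indices and points
def etIdx (n : ℕ) : Fin (2*n+2) := ⟨2*n+1, by omega⟩
def enIdx (n : ℕ) : Fin (2*n+2) := ⟨2*n, by omega⟩
def iIdx (n : ℕ) (a : Fin (2*n)) : Fin (2*n+2) := ⟨a.val, by have := a.isLt; omega⟩
def Epoint (n : ℕ) (t : ℝ) : Fin (2*n+2) → ℝ := fun i => if i.val = 2*n+1 then t else 0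
def Ppoint (n : ℕ) (y : Fin (2*n) → ℝ) (t : ℝ) : Fin (2*n+2) → ℝ :=
  fun i => if h : i.val < 2*n then y ⟨i.val, h⟩ else if i.val = 2*n then 0 else t

-- Ups entry lemmas
lemma Ups_lt_lt (n : ℕ) (w : Fin (2*n) → ℝ) (r : ℝ) (i j : Fin (2*n+2))
    (hi : i.val < 2*n) (hj : j.val < 2*n) :
    Ups n w r i j = if i = j then 1 else 0 := by
  simp only [Ups, GamO, Matrix.of_apply, dif_pos hi, dif_pos hj, Matrix.one_apply]
  simp [Fin.ext_iff]

lemma Ups_lt_mid (n : ℕ) (w : Fin (2*n) → ℝ) (r : ℝ) (i j : Fin (2*n+2))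
    (hi : i.val < 2*n) (hj : j.val = 2*n) :
    Ups n w r i j = 0 := by
  have h1 : ¬ j.val < 2*n := by omega
  simp only [Ups, GamO, Matrix.of_apply, dif_pos hi, dif_neg h1, hj]
  simp

lemma Ups_lt_top (n : ℕ) (w : Fin (2*n) → ℝ) (r : ℝ) (a : Fin (2*n)) :
    Ups n w r (iIdx n a) (etIdx n) = w a := by
  have hi : (iIdx n a).val < 2*n := a.isLt
  have h1 : ¬ (etIdx n).val < 2*n := by simp [etIdx]
  have h2 : ¬ (etIdx n).val = 2*n := by simp [etIdx]
  simp only [Ups, GamO, Matrix.of_apply, dif_pos hi, dif_neg h1, if_neg h2]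
  congr 1

lemma Ups_mid_lt (n : ℕ) (w : Fin (2*n) → ℝ) (r : ℝ) (b : Fin (2*n)) :
    Ups n w r (enIdx n) (iIdx n b) = ∑ c, w c * zetaC n c b := by
  have h1 : ¬ (enIdx n).val < 2*n := by simp [enIdx]
  have h2 : (enIdx n).val = 2*n := rfl
  have hj : (iIdx n b).val < 2*n := b.isLt
  simp only [Ups, GamO, Matrix.of_apply, dif_neg h1, if_pos h2, dif_pos hj,
    Matrix.vecMul_one]
  have hb : (⟨(iIdx n b).val, hj⟩ : Fin (2*n)) = b := by
    apply Fin.ext; rfl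
  rw [hb]
  simp [Matrix.vecMul, dotProduct]

lemma Ups_mid_mid (n : ℕ) (w : Fin (2*n) → ℝ) (r : ℝ) :
    Ups n w r (enIdx n) (enIdx n) = 1 := by
  have h1 : ¬ (enIdx n).val < 2*n := by simp [enIdx]
  have h2 : (enIdx n).val = 2*n := rfl
  have h3 : ¬ (enIdx n).val < 2*n := h1
  simp only [Ups, GamO, Matrix.of_apply, dif_neg h3, if_pos h2, dif_neg h3]

lemma Ups_top (n : ℕ) (w : Fin (2*n) → ℝ) (r : ℝ) (j : Fin (2*n+2)) :
    Ups n w r (etIdx n) j = if j.val = 2*n+1 then 1 else 0 := by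
  have h1 : ¬ (etIdx n).val < 2*n := by simp [etIdx]
  have h2 : ¬ (etIdx n).val = 2*n := by simp [etIdx]
  by_cases hj : j.val = 2*n+1
  · have hj1 : ¬ j.val < 2*n := by omega
    have hj2 : ¬ j.val = 2*n := by omega
    simp only [Ups, GamO, Matrix.of_apply, dif_neg h1, if_neg h2, hj, if_pos rfl]
  · have hjlt : j.val < 2*n+2 := j.isLt
    by_cases hl : j.val < 2*n
    · simp [Ups, GamO, dif_neg h1, h2, hj, dif_pos hl]
    · have hj2 : j.val = 2*n := by omega
      have hl2 : ¬ j.val = 2*n+1 := hj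
      simp only [Ups, GamO, Matrix.of_apply, dif_neg h1, if_neg h2, if_neg hl2]

lemma zeta_orth (n : ℕ) (a c : Fin (2*n)) :
    ∑ b, zetaC n a b * zetaC n c b = (if a = c then 1 else 0) := by
  have ha := a.isLt
  have hc := c.isLt
  have hb0 : (if a.val % 2 = 0 then a.val + 1 else a.val - 1) < 2*n := by
    by_cases h : a.val % 2 = 0 <;> simp [h] <;> omega
  set b₀ : Fin (2*n) := ⟨_, hb0⟩ with hb₀
  have hb0v : b₀.val = if a.val % 2 = 0 then a.val + 1 else a.val - 1 := rfl
  have hgoal : (if a = c then (1:ℝ) else 0) = if a.val = c.val then 1 else 0 := by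
    simp [Fin.ext_iff]
  rw [Finset.sum_eq_single b₀, hgoal]
  · by_cases hpar : a.val % 2 = 0
    · have hv : b₀.val = a.val + 1 := by rw [hb0v, if_pos hpar]
      simp only [zetaC, Matrix.of_apply]
      split_ifs
      all_goals try norm_num
      all_goals exfalso
      all_goals omega
    · have hv : b₀.val = a.val - 1 := by rw [hb0v, if_neg hpar]
      have hodd : a.val % 2 = 1 := by omega
      have hpos : 1 ≤ a.val := by omega
      simp only [zetaC, Matrix.of_apply]
      split_ifs
      all_goals try norm_num
      all_goals exfalso
      all_goals omega
  · intro b _ hb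
    have hbv : b.val ≠ b₀.val := fun hv => hb (Fin.ext hv)
    rw [hb0v] at hbv
    have hz : zetaC n a b = 0 := by
      simp only [zetaC, Matrix.of_apply]
      by_cases hpar : a.val % 2 = 0
      · rw [if_pos hpar] at hbv
        split_ifs <;> first | rfl | (exfalso; omega)
      · rw [if_neg hpar] at hbv
        have hodd : a.val % 2 = 1 := by omega
        split_ifs <;> first | rfl | (exfalso; omega)
    rw [hz, zero_mul]
  · intro h; exact absurd (Finset.mem_univ b₀) h

lemma jac_entry {N : ℕ} {ρ : (Fin N → ℝ) → Fin N → ℝ} (hρ : Differentiable ℝ ρ)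
    (z : Fin N → ℝ) (i j : Fin N) :
    fderiv ℝ (fun z => ρ z i) z (Pi.single j 1) = jacM N ρ z i j := by
  have h := (ContinuousLinearMap.proj (R := ℝ) (φ := fun _ : Fin N => ℝ) i).hasFDerivAt.comp
    z (hρ z).hasFDerivAt
  have h' : HasFDerivAt (fun z => ρ z i)
      ((ContinuousLinearMap.proj i).comp (fderiv ℝ ρ z)) z := h
  rw [h'.fderiv]
  simp [jacM]

lemma Epoint_differentiable (n : ℕ) : Differentiable ℝ (Epoint n) := by
  apply differentiable_pi.mpr; intro i
  unfold Epoint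
  by_cases h : i.val = 2*n+1
  · simp only [if_pos h]; exact differentiable_id
  · simp only [if_neg h]; exact differentiable_const 0

lemma Epoint_et (n : ℕ) (t : ℝ) : Epoint n t (etIdx n) = t := by
  simp [Epoint, etIdx]

lemma Ppoint_et (n : ℕ) (y : Fin (2*n) → ℝ) (t : ℝ) : Ppoint n y t (etIdx n) = t := by
  have h1 : ¬ (etIdx n).val < 2*n := by simp [etIdx]
  have h2 : ¬ (etIdx n).val = 2*n := by simp [etIdx]
  simp [Ppoint, dif_neg h1, if_neg h2]

def Lmap (n : ℕ) : (Fin (2*n) → ℝ) →L[ℝ] (Fin (2*n+2) → ℝ) :=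
  ContinuousLinearMap.pi (fun i : Fin (2*n+2) =>
    if h : i.val < 2*n then ContinuousLinearMap.proj ⟨i.val, h⟩ else 0)

lemma Ppoint_hasFDerivAt (n : ℕ) (t : ℝ) (y : Fin (2*n) → ℝ) :
    HasFDerivAt (fun y' => Ppoint n y' t) (Lmap n) y := by
  have heq : (fun y' => Ppoint n y' t) = fun y' => Lmap n y' + Ppoint n 0 t := by
    funext y' i
    simp only [Lmap, ContinuousLinearMap.pi_apply, Ppoint, Pi.add_apply]
    by_cases h : i.val < 2*n
    · simp [dif_pos h]
    · simp [dif_neg h]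
  rw [heq]
  exact (Lmap n).hasFDerivAt.add_const _

lemma Lmap_single (n : ℕ) (b : Fin (2*n)) :
    Lmap n (Pi.single b 1) = Pi.single (iIdx n b) (1:ℝ) := by
  funext i
  simp only [Lmap, ContinuousLinearMap.pi_apply]
  by_cases h : i.val < 2*n
  · rw [dif_pos h]
    simp only [ContinuousLinearMap.proj_apply]
    by_cases hb : i.val = b.val
    · have h1 : (⟨i.val, h⟩ : Fin (2*n)) = b := Fin.ext hb
      have h2 : i = iIdx n b := Fin.ext hb
      rw [h1, h2]
      simp
    · have h1 : (⟨i.val, h⟩ : Fin (2*n)) ≠ b := fun he => hb (congrArg Fin.val he)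
      have h2 : i ≠ iIdx n b := fun he => hb (congrArg Fin.val he)
      rw [Pi.single_eq_of_ne h1, Pi.single_eq_of_ne h2]
  · have h2 : i ≠ iIdx n b := fun he => h (by rw [he]; exact b.isLt)
    rw [dif_neg h, Pi.single_eq_of_ne h2]
    simp

def projR (N : ℕ) (i : Fin N) : (Fin N → ℝ) →L[ℝ] ℝ :=
  ContinuousLinearMap.proj (R := ℝ) (φ := fun _ : Fin N => ℝ) i

lemma projR_hasFDerivAt (N : ℕ) (i : Fin N) (z : Fin N → ℝ) :
    HasFDerivAt (fun z : Fin N → ℝ => z i) (projR N i) z :=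
  (ContinuousLinearMap.proj (R := ℝ) (φ := fun _ : Fin N => ℝ) i).hasFDerivAt (x := z)

lemma projR_apply (N : ℕ) (i : Fin N) (v : Fin N → ℝ) : projR N i v = v i := rfl

lemma Ppoint_pair_differentiable (n : ℕ) :
    Differentiable ℝ (fun p : (Fin (2*n) → ℝ) × ℝ => Ppoint n p.1 p.2) := by
  apply differentiable_pi.mpr; intro i
  unfold Ppoint
  by_cases h : i.val < 2*n
  · simp only [dif_pos h]
    exact (differentiable_pi.mp differentiable_fst) _
  · by_cases h2 : i.val = 2*n
    · simp only [dif_neg h, if_pos h2]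
      exact differentiable_const 0
    · simp only [dif_neg h, if_neg h2]
      exact differentiable_snd

theorem statement18 (n : ℕ) (hn : 1 ≤ n)
    (ρ : (Fin (2*n+2) → ℝ) → (Fin (2*n+2) → ℝ))
    (hρ : ContDiff ℝ 1 ρ)
    (hjac : ∀ z : Fin (2*n+2) → ℝ,
      ∃ (w : Fin (2*n) → ℝ) (r : ℝ), jacM (2*n+2) ρ z = Ups n w r) :
    ∃ (c : ℝ) (φ : ℝ → Fin (2*n) → ℝ) (H : (Fin (2*n) → ℝ) → ℝ → ℝ),
      Differentiable ℝ φ ∧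
      Differentiable ℝ (fun p : (Fin (2*n) → ℝ) × ℝ => H p.1 p.2) ∧
      (∀ z : Fin (2*n+2) → ℝ, ρ z = rhoMap n φ H c z) ∧
      (∀ (y : Fin (2*n) → ℝ) (t : ℝ) (a : Fin (2*n)),
        deriv (fun s => φ s a) t =
          ∑ b, zetaC n a b * fderiv ℝ (fun y' => H y' t) y (Pi.single b 1)) := by
  have hρd : Differentiable ℝ ρ := hρ.differentiable one_ne_zero
  have hcomp : ∀ i : Fin (2*n+2), Differentiable ℝ (fun z => ρ z i) :=
    fun i => differentiable_pi.mp hρd i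
  have hJ : ∀ (z : Fin (2*n+2) → ℝ), ∃ (w : Fin (2*n) → ℝ) (r : ℝ),
      ∀ i j, fderiv ℝ (fun z => ρ z i) z (Pi.single j 1) = Ups n w r i j := by
    intro z
    obtain ⟨w, r, hw⟩ := hjac z
    exact ⟨w, r, fun i j => by rw [jac_entry hρd, hw]⟩
  have hgdiff : ∀ i : Fin (2*n+2),
      Differentiable ℝ (fun z : Fin (2*n+2) → ℝ => ρ z i - z i) :=
    fun i => (hcomp i).sub (differentiable_pi.mp differentiable_id i)
  have hgfd : ∀ (i j : Fin (2*n+2)) (z : Fin (2*n+2) → ℝ),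
      fderiv ℝ (fun z : Fin (2*n+2) → ℝ => ρ z i - z i) z (Pi.single j 1)
      = fderiv ℝ (fun z => ρ z i) z (Pi.single j 1) - (Pi.single j 1 : Fin (2*n+2) → ℝ) i := by
    intro i j z
    have hp0 := (ContinuousLinearMap.proj (R := ℝ) (φ := fun _ : Fin (2*n+2) => ℝ) i).hasFDerivAt (x := z)
    have hp : HasFDerivAt (fun z : Fin (2*n+2) → ℝ => z i)
        (ContinuousLinearMap.proj (R := ℝ) (φ := fun _ : Fin (2*n+2) => ℝ) i) z := hp0
    have h1 : HasFDerivAt (fun z : Fin (2*n+2) → ℝ => ρ z i - z i)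
        (fderiv ℝ (fun z => ρ z i) z - ContinuousLinearMap.proj (R := ℝ) (φ := fun _ : Fin (2*n+2) => ℝ) i) z :=
      ((hcomp i z).hasFDerivAt).sub hp
    rw [h1.fderiv]
    simp [ContinuousLinearMap.sub_apply, ContinuousLinearMap.proj_apply]
  -- vanishing of partials
  have hvan1 : ∀ (i j : Fin (2*n+2)), i.val < 2*n → j.val ≠ 2*n+1 →
      ∀ z, fderiv ℝ (fun z : Fin (2*n+2) → ℝ => ρ z i - z i) z (Pi.single j 1) = 0 := by
    intro i j hi hj z
    obtain ⟨w, r, hw⟩ := hJ z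
    rw [hgfd, hw]
    by_cases hjlt : j.val < 2*n
    · rw [Ups_lt_lt n w r i j hi hjlt]
      by_cases hij : i = j
      · subst hij
        rw [if_pos rfl, Pi.single_eq_same]
        ring
      · rw [if_neg hij, Pi.single_eq_of_ne hij]
        ring
    · have hjm : j.val = 2*n := by have := j.isLt; omega
      rw [Ups_lt_mid n w r i j hi hjm]
      have hne : i ≠ j := by intro he; rw [← he] at hjm; omega
      rw [Pi.single_eq_of_ne hne]
      ring
  have hvan2 : ∀ z, fderiv ℝ
      (fun z : Fin (2*n+2) → ℝ => ρ z (enIdx n) - z (enIdx n)) z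
      (Pi.single (enIdx n) 1) = 0 := by
    intro z
    obtain ⟨w, r, hw⟩ := hJ z
    rw [hgfd, hw, Ups_mid_mid n w r, Pi.single_eq_same]
    ring
  have hvan3 : ∀ j z, fderiv ℝ
      (fun z : Fin (2*n+2) → ℝ => ρ z (etIdx n) - z (etIdx n)) z (Pi.single j 1) = 0 := by
    intro j z
    obtain ⟨w, r, hw⟩ := hJ z
    rw [hgfd, hw, Ups_top n w r j]
    by_cases hj : j = etIdx n
    · subst hj
      simp [etIdx, Pi.single_eq_same]
    · have h1 : ¬ j.val = 2*n+1 := fun hv => hj (Fin.ext hv)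
      rw [if_neg h1, Pi.single_eq_of_ne (Ne.symm hj)]
      ring
  -- representations
  have hrep1 : ∀ (a : Fin (2*n)) (z : Fin (2*n+2) → ℝ),
      ρ z (iIdx n a) - z (iIdx n a) = ρ (Epoint n (z (etIdx n))) (iIdx n a) := by
    intro a z
    have hkey := const_of_partials (fun z => ρ z (iIdx n a) - z (iIdx n a))
      (hgdiff _) {j | j.val ≠ 2*n+1}
      (fun z j hj => hvan1 _ j a.isLt hj z) z (Epoint n (z (etIdx n))) ?_
    · have hkey' : ρ z (iIdx n a) - z (iIdx n a)
          = ρ (Epoint n (z (etIdx n))) (iIdx n a) - Epoint n (z (etIdx n)) (iIdx n a) := hkey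
      have hz : Epoint n (z (etIdx n)) (iIdx n a) = 0 := by
        have hne : ¬ (iIdx n a).val = 2*n+1 := by
          have := a.isLt
          simp only [iIdx]
          omega
        simp [Epoint, hne]
      rw [hkey', hz, sub_zero]
    · intro i hi
      simp only [Set.mem_setOf_eq, not_not] at hi
      have hie : i = etIdx n := Fin.ext hi
      rw [hie, Epoint_et]
  have hrep2 : ∀ z : Fin (2*n+2) → ℝ, ρ z (enIdx n) - z (enIdx n)
      = ρ (Ppoint n (yPart n z) (tCoord n z)) (enIdx n) := by
    intro z
    have hkey := const_of_partials (fun z => ρ z (enIdx n) - z (enIdx n))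
      (hgdiff _) {enIdx n}
      (fun z j hj => by rw [Set.mem_singleton_iff] at hj; rw [hj]; exact hvan2 z)
      z (Ppoint n (yPart n z) (tCoord n z)) ?_
    · have hkey' : ρ z (enIdx n) - z (enIdx n)
          = ρ (Ppoint n (yPart n z) (tCoord n z)) (enIdx n)
            - Ppoint n (yPart n z) (tCoord n z) (enIdx n) := hkey
      have hz : Ppoint n (yPart n z) (tCoord n z) (enIdx n) = 0 := by
        have h1 : ¬ (enIdx n).val < 2*n := by simp [enIdx]
        have h2 : (enIdx n).val = 2*n := rfl
        simp [Ppoint, dif_neg h1, h2]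
      rw [hkey', hz, sub_zero]
    · intro i hi
      rw [Set.mem_singleton_iff] at hi
      by_cases h1 : i.val < 2*n
      · simp only [Ppoint, dif_pos h1, yPart]
      · have h2 : ¬ i.val = 2*n := fun hv => hi (Fin.ext hv)
        have h3 : i.val = 2*n+1 := by have := i.isLt; omega
        simp only [Ppoint, dif_neg h1, if_neg h2, tCoord]
        congr 1
        exact Fin.ext h3
  have hrep3 : ∀ z : Fin (2*n+2) → ℝ, ρ z (etIdx n) - z (etIdx n)
      = ρ (fun _ => 0) (etIdx n) := by
    intro z
    have hkey := const_of_partials (fun z => ρ z (etIdx n) - z (etIdx n))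
      (hgdiff _) Set.univ (fun z j _ => hvan3 j z) z (fun _ => 0)
      (fun i hi => absurd (Set.mem_univ i) hi)
    have hkey' : ρ z (etIdx n) - z (etIdx n)
        = ρ (fun _ => 0) (etIdx n) - (0:ℝ) := hkey
    rw [hkey', sub_zero]
  -- the data
  refine ⟨ρ (fun _ => 0) (etIdx n),
    fun t a => ρ (Epoint n t) (iIdx n a),
    fun y t => ρ (Ppoint n y t) (enIdx n), ?_, ?_, ?_, ?_⟩
  · apply differentiable_pi.mpr
    intro a
    exact (hcomp (iIdx n a)).comp (Epoint_differentiable n)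
  · exact (hcomp (enIdx n)).comp (Ppoint_pair_differentiable n)
  · intro z
    funext i
    simp only [rhoMap]
    by_cases hi : i.val < 2*n
    · rw [dif_pos hi]
      show ρ z i = z i + ρ (Epoint n (tCoord n z)) (iIdx n ⟨i.val, hi⟩)
      have h1 := hrep1 ⟨i.val, hi⟩ z
      have hii : iIdx n ⟨i.val, hi⟩ = i := Fin.ext rfl
      rw [hii] at h1 ⊢
      have htc : tCoord n z = z (etIdx n) := rfl
      rw [htc]
      linarith
    · rw [dif_neg hi]
      by_cases h2 : i.val = 2*n
      · rw [if_pos h2]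
        have hie : i = enIdx n := Fin.ext h2
        subst hie
        show ρ z (enIdx n) = z (enIdx n) + ρ (Ppoint n (yPart n z) (tCoord n z)) (enIdx n)
        have h1 := hrep2 z
        linarith
      · rw [if_neg h2]
        have h3 : i.val = 2*n+1 := by have := i.isLt; omega
        have hie : i = etIdx n := Fin.ext h3
        subst hie
        show ρ z (etIdx n) = z (etIdx n) + ρ (fun _ => 0) (etIdx n)
        have h1 := hrep3 z
        linarith
  · intro y t a
    obtain ⟨w, r, hw⟩ := hJ (Ppoint n y t)
    set ψ : ℝ → ℝ := fun s => ρ (Epoint n s) (iIdx n a) with hψ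
    have hψd : Differentiable ℝ ψ :=
      (hcomp (iIdx n a)).comp (Epoint_differentiable n)
    -- LHS equals w a
    have hwa : w a = deriv ψ t := by
      have hfun : (fun z : Fin (2*n+2) → ℝ => ρ z (iIdx n a))
          = fun z => z (iIdx n a) + ψ (z (etIdx n)) := by
        funext z
        have h1 := hrep1 a z
        simp only [hψ]
        linarith
      have hder : HasFDerivAt (fun z : Fin (2*n+2) → ℝ => z (iIdx n a) + ψ (z (etIdx n)))
          (projR (2*n+2) (iIdx n a) +
            deriv ψ ((Ppoint n y t) (etIdx n)) • projR (2*n+2) (etIdx n))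
          (Ppoint n y t) := by
        apply HasFDerivAt.add
        · exact projR_hasFDerivAt _ _ _
        · exact HasDerivAt.comp_hasFDerivAt _ (hψd _).hasDerivAt
            (projR_hasFDerivAt _ _ _)
      rw [← hfun] at hder
      have h3 := hder.fderiv
      have h4 := congrArg (fun L => L (Pi.single (etIdx n) (1:ℝ))) h3
      simp only [ContinuousLinearMap.add_apply, ContinuousLinearMap.smul_apply,
        projR_apply] at h4
      rw [hw (iIdx n a) (etIdx n), Ups_lt_top] at h4
      have hne : iIdx n a ≠ etIdx n := by
        intro he
        have := a.isLt
        have h5 : (iIdx n a).val = 2*n+1 := by rw [he]; rfl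
        simp only [iIdx] at h5
        omega
      rw [Pi.single_eq_of_ne hne, Pi.single_eq_same, Ppoint_et] at h4
      rw [h4]
      simp
    -- RHS terms
    have hR : ∀ b : Fin (2*n),
        fderiv ℝ (fun y' => ρ (Ppoint n y' t) (enIdx n)) y (Pi.single b 1)
        = ∑ c, w c * zetaC n c b := by
      intro b
      have h1 : HasFDerivAt (fun y' => ρ (Ppoint n y' t) (enIdx n))
          ((fderiv ℝ (fun z => ρ z (enIdx n)) (Ppoint n y t)).comp (Lmap n)) y := by
        have h2 := ((hcomp (enIdx n) (Ppoint n y t)).hasFDerivAt).comp y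
          (Ppoint_hasFDerivAt n t y)
        exact h2
      rw [h1.fderiv]
      simp only [ContinuousLinearMap.coe_comp', Function.comp_apply]
      rw [Lmap_single, hw (enIdx n) (iIdx n b), Ups_mid_lt]
    -- combine
    have hsum : ∑ b, zetaC n a b *
        fderiv ℝ (fun y' => ρ (Ppoint n y' t) (enIdx n)) y (Pi.single b 1) = w a := by
      calc ∑ b, zetaC n a b *
            fderiv ℝ (fun y' => ρ (Ppoint n y' t) (enIdx n)) y (Pi.single b 1)
          = ∑ b, zetaC n a b * ∑ c, w c * zetaC n c b :=
            Finset.sum_congr rfl fun b _ => by rw [hR b]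
        _ = ∑ b, ∑ c, w c * (zetaC n a b * zetaC n c b) := by
            refine Finset.sum_congr rfl fun b _ => ?_
            rw [Finset.mul_sum]
            exact Finset.sum_congr rfl fun c _ => by ring
        _ = ∑ c, ∑ b, w c * (zetaC n a b * zetaC n c b) := Finset.sum_comm
        _ = ∑ c, w c * (if a = c then 1 else 0) := by
            refine Finset.sum_congr rfl fun c _ => ?_
            rw [← Finset.mul_sum, zeta_orth]
        _ = w a := by simp
    rw [hsum, ← hwa]

end
end
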